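/- arXiv:2303.11576 — 8 statements merged into one kernel-verified Lean document; each statement's English description precedes it below -/
import Mathlib

section
/- Suppose Assumptions 4.8 and 4.9 hold: there is y* ∈ Y with β(y*) := max_{i∈I} ∫₀^∞ e^{−λ̲ t} ρ(S_i(t,y*),y*) dt < ∞, and there are constants L > 0 and α < λ̲ with ρ(S_i(t,u),S_i(t,v)) ≤ L e^{α t} ρ(u,v) for all u,v ∈ Y, i ∈ I, t ≥ 0. Let V(y,i) := ρ(y,y*). Then for every (y,i) ∈ X one has ∫₀^∞ e^{−Λ(y,i,t)} ρ(S_i(t,y),y*) dt ≤ (L/(λ̲ − α)) V(y,i) + β(y*). Consequently, for every probability measure μ on X with ∫_X V dμ < ∞, the measure μG̃ defined by μG̃(A) := ∫_X G̃(x,A) μ(dx) satisfies ∫_X V d(μG̃) ≤ (L/(λ̲ − α)) ∫_X V dμ + β(y*) < ∞; in particular the normalized measure μG̃ / μG̃(X) has finite first moment with respect to V. -/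
open MeasureTheory ProbabilityTheory Real Set Filter Topology

noncomputable section

/-- The operator `f ↦ (x ↦ ∫ f dκ(x))` iterated `n` times. -/
def kernelOpIter {Z : Type*} [MeasurableSpace Z] (κ : Kernel Z Z) :
    ℕ → (Z → ℝ) → Z → ℝ
  | 0, f => f
  | n + 1, f => fun z => ∫ w, kernelOpIter κ n f w ∂(κ z)

/-- The `n`-fold iterate of a kernel (`n = 0` giving the identity kernel). -/
def kIter {Z : Type*} [MeasurableSpace Z] (κ : Kernel Z Z) : ℕ → Kernel Z Z
  | 0 => Kernel.id
  | n + 1 => κ ∘ₖ kIter κ n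

/-- `Λ(y,i,t) = ∫₀ᵗ λ(S_i(h,y)) dh`. -/
def cumInt {Y I : Type*} (S : I → ℝ → Y → Y) (lam : Y → ℝ) (y : Y) (i : I) (t : ℝ) : ℝ :=
  ∫ h in (0:ℝ)..t, lam (S i h y)

/-- `G((y,i),A) = ∫₀^∞ λ(S_i(t,y)) e^{−Λ(y,i,t)} 1_A(S_i(t,y),i) dt`. -/
def Gker {Y I : Type*} (S : I → ℝ → Y → Y) (lam : Y → ℝ)
    (x : Y × I) (A : Set (Y × I)) : ℝ :=
  ∫ t in Ioi (0:ℝ), lam (S x.2 t x.1) * exp (-(cumInt S lam x.1 x.2 t)) *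
    A.indicator (fun _ => (1:ℝ)) (S x.2 t x.1, x.2)

/-- `G̃((y,i),A) = ∫₀^∞ e^{−Λ(y,i,t)} 1_A(S_i(t,y),i) dt`. -/
def Gtil {Y I : Type*} (S : I → ℝ → Y → Y) (lam : Y → ℝ)
    (x : Y × I) (A : Set (Y × I)) : ℝ :=
  ∫ t in Ioi (0:ℝ), exp (-(cumInt S lam x.1 x.2 t)) *
    A.indicator (fun _ => (1:ℝ)) (S x.2 t x.1, x.2)

/-- `W((y,i),A) = ∫_Y Σ_j π_{ij}(u) 1_A(u,j) J(y,du)`. -/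
def Wker {Y I : Type*} [MeasurableSpace Y] [Fintype I]
    (pm : I → I → Y → ℝ) (J : Kernel Y Y) (x : Y × I) (A : Set (Y × I)) : ℝ :=
  ∫ u, ∑ j, pm x.2 j u * A.indicator (fun _ => (1:ℝ)) (u, j) ∂(J x.1)

/-- `W̃((y,i),A) = λ(y)·W((y,i),A)`. -/
def Wtil {Y I : Type*} [MeasurableSpace Y] [Fintype I] (lam : Y → ℝ)
    (pm : I → I → Y → ℝ) (J : Kernel Y Y) (x : Y × I) (A : Set (Y × I)) : ℝ :=
  lam x.1 * Wker pm J x A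

/-- `P((y,i),A) = ∫₀^∞ λ(S_i(t,y)) e^{−Λ(y,i,t)} W((S_i(t,y),i),A) dt`. -/
def Pker {Y I : Type*} [MeasurableSpace Y] [Fintype I] (S : I → ℝ → Y → Y) (lam : Y → ℝ)
    (pm : I → I → Y → ℝ) (J : Kernel Y Y) (x : Y × I) (A : Set (Y × I)) : ℝ :=
  ∫ t in Ioi (0:ℝ), lam (S x.2 t x.1) * exp (-(cumInt S lam x.1 x.2 t)) *
    Wker pm J (S x.2 t x.1, x.2) A

/-- `P_T f(x) = Σ_{n=0}^∞ P̄ⁿ(g_T · (P̄ h_T))((x,0))`. -/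
def PTf {Y I : Type*} [MeasurableSpace Y] [MeasurableSpace I] (S : I → ℝ → Y → Y)
    (Pbar : Kernel (Y × I × ℝ) (Y × I × ℝ)) (f : Y × I → ℝ) (T : ℝ) (x : Y × I) : ℝ :=
  ∑' n : ℕ, kernelOpIter Pbar n
    (fun z => (Icc (0:ℝ) T).indicator (fun _ => (1:ℝ)) z.2.2 *
        f (S z.2.1 (T - z.2.2) z.1, z.2.1) *
        ∫ w, (Ioi T).indicator (fun _ => (1:ℝ)) w.2.2 ∂(Pbar z))
    (x.1, x.2, 0)

/-- `ψ_f((y,i),t,T)`. -/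
def psiF {Y I : Type*} [MeasurableSpace Y] [Fintype I] (S : I → ℝ → Y → Y) (lam : Y → ℝ)
    (pm : I → I → Y → ℝ) (J : Kernel Y Y) (f : Y × I → ℝ) (x : Y × I) (t T : ℝ) : ℝ :=
  lam (S x.2 t x.1) * exp (-(cumInt S lam x.1 x.2 t)) *
    ∫ u, ∑ j, pm x.2 j u * exp (-(cumInt S lam u j (T - t))) * f (S j (T - t) u, j)
      ∂(J (S x.2 t x.1))

/-- The operator `G` acting on functions. -/
def Gop {Y I : Type*} (S : I → ℝ → Y → Y) (lam : Y → ℝ) (f : Y × I → ℝ) (x : Y × I) : ℝ :=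
  ∫ t in Ioi (0:ℝ), lam (S x.2 t x.1) * exp (-(cumInt S lam x.1 x.2 t)) * f (S x.2 t x.1, x.2)

/-- The operator `W` acting on functions. -/
def Wop {Y I : Type*} [MeasurableSpace Y] [Fintype I]
    (pm : I → I → Y → ℝ) (J : Kernel Y Y) (f : Y × I → ℝ) (x : Y × I) : ℝ :=
  ∫ u, ∑ j, pm x.2 j u * f (u, j) ∂(J x.1)

/-- Invariance of a measure for the semigroup `{P_T}`. -/
def isInvariantSemigroup {Y I : Type*} [MeasurableSpace Y] [MeasurableSpace I]
    (S : I → ℝ → Y → Y) (Pbar : Kernel (Y × I × ℝ) (Y × I × ℝ))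
    (μ : Measure (Y × I)) : Prop :=
  ∀ T ≥ (0:ℝ), ∀ A : Set (Y × I), MeasurableSet A →
    ∫ x, PTf S Pbar (A.indicator fun _ => (1:ℝ)) T x ∂μ = (μ A).toReal

/-- Invariance of a measure for the kernel `P`. -/
def isInvariantP {Y I : Type*} [MeasurableSpace Y] [MeasurableSpace I] [Fintype I] (S : I → ℝ → Y → Y)
    (lam : Y → ℝ) (pm : I → I → Y → ℝ) (J : Kernel Y Y) (μ : Measure (Y × I)) : Prop :=
  ∀ A : Set (Y × I), MeasurableSet A → ∫ x, Pker S lam pm J x A ∂μ = (μ A).toReal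


theorem Gtil_moment_bound
    {Y : Type*} [MetricSpace Y] [TopologicalSpace.SeparableSpace Y] [CompleteSpace Y]
    [MeasurableSpace Y] [BorelSpace Y]
    {I : Type*} [Fintype I] [Nonempty I] [TopologicalSpace I] [DiscreteTopology I]
    [MeasurableSpace I] [MeasurableSingletonClass I]
    (S : I → ℝ → Y → Y)
    (hS_cont : ∀ i, ContinuousOn (fun p : ℝ × Y => S i p.1 p.2) (Ici (0:ℝ) ×ˢ (univ : Set Y)))
    (hS_zero : ∀ i y, S i 0 y = y)
    (hS_add : ∀ i, ∀ s ≥ (0:ℝ), ∀ t ≥ (0:ℝ), ∀ y, S i (s + t) y = S i s (S i t y))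
    (lam : Y → ℝ) (hlam_cont : Continuous lam) (lmin lmax : ℝ) (hlmin : 0 < lmin)
    (hlam_bd : ∀ y, lmin ≤ lam y ∧ lam y ≤ lmax)
    (ystar : Y)
    (hA48 : ∀ i, IntegrableOn (fun t => exp (-(lmin * t)) * dist (S i t ystar) ystar) (Ioi 0))
    (L α : ℝ) (hL : 0 < L) (hα : α < lmin)
    (hA49 : ∀ u v : Y, ∀ i, ∀ t ≥ (0:ℝ), dist (S i t u) (S i t v) ≤ L * exp (α * t) * dist u v) :
    (∀ y i, ∫ t in Ioi (0:ℝ), exp (-(cumInt S lam y i t)) * dist (S i t y) ystar ≤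
      L / (lmin - α) * dist y ystar +
        (⨆ i' : I, ∫ t in Ioi (0:ℝ), exp (-(lmin * t)) * dist (S i' t ystar) ystar)) ∧
    ∀ μ : Measure (Y × I), IsProbabilityMeasure μ →
      Integrable (fun x : Y × I => dist x.1 ystar) μ →
      ∀ ν : Measure (Y × I), IsFiniteMeasure ν →
        (∀ A : Set (Y × I), MeasurableSet A → (ν A).toReal = ∫ x, Gtil S lam x A ∂μ) →
        Integrable (fun x : Y × I => dist x.1 ystar) ν ∧
        (∫ x : Y × I, dist x.1 ystar ∂ν ≤
          L / (lmin - α) * ∫ x : Y × I, dist x.1 ystar ∂μ +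
            (⨆ i' : I, ∫ t in Ioi (0:ℝ), exp (-(lmin * t)) * dist (S i' t ystar) ystar)) ∧
        Integrable (fun x : Y × I => dist x.1 ystar) ((ν univ)⁻¹ • ν) := by
  classical
  set β := ⨆ i' : I, ∫ t in Ioi (0:ℝ), exp (-(lmin * t)) * dist (S i' t ystar) ystar with hβdef
  have hβle : ∀ i : I, ∫ t in Ioi (0:ℝ), exp (-(lmin * t)) * dist (S i t ystar) ystar ≤ β := by
    intro i
    rw [hβdef]
    exact le_ciSup (f := fun i' : I => ∫ t in Ioi (0:ℝ),
      exp (-(lmin * t)) * dist (S i' t ystar) ystar)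
      (Set.Finite.bddAbove (Set.finite_range _)) i
  have hβ0 : 0 ≤ β :=
    le_trans (setIntegral_nonneg measurableSet_Ioi fun t _ =>
      mul_nonneg (exp_pos _).le dist_nonneg) (hβle (Classical.arbitrary I))
  have hc0 : 0 ≤ L / (lmin - α) := div_nonneg hL.le (by linarith)
  have hSc : ∀ i : I, Continuous fun p : ℝ × Y => S i (max p.1 0) p.2 := fun i =>
    (hS_cont i).comp_continuous
      ((continuous_fst.max continuous_const).prodMk continuous_snd)
      fun p => ⟨Set.mem_Ici.mpr (le_max_right _ _), mem_univ _⟩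
  obtain ⟨Λ', hΛ'def⟩ : ∃ f : Y → I → ℝ → ℝ,
      f = fun y i t => ∫ h in (0:ℝ)..t, lam (S i (max h 0) y) := ⟨_, rfl⟩
  have hΛcont : ∀ i : I, Continuous fun p : Y × ℝ => Λ' p.1 i p.2 := fun i => by
    simp only [hΛ'def]
    refine intervalIntegral.continuous_parametric_intervalIntegral_of_continuous
      (f := fun (p : Y × ℝ) (h : ℝ) => lam (S i (max h 0) p.1)) ?_ continuous_snd
    exact hlam_cont.comp ((hSc i).comp (continuous_snd.prodMk continuous_fst.fst))
  have hΛeq : ∀ y (i : I) t, 0 ≤ t → cumInt S lam y i t = Λ' y i t := by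
    intro y i t ht
    simp only [hΛ'def]
    refine intervalIntegral.integral_congr fun h hh => ?_
    rw [uIcc_of_le ht] at hh
    rw [max_eq_left hh.1]
  have hΛint : ∀ (y : Y) (i : I), Continuous fun h : ℝ => lam (S i (max h 0) y) := fun y i =>
    hlam_cont.comp ((hSc i).comp (continuous_id.prodMk continuous_const))
  have hΛge : ∀ y (i : I) t, 0 ≤ t → lmin * t ≤ cumInt S lam y i t := by
    intro y i t ht
    rw [hΛeq y i t ht, hΛ'def]
    have h1 : lmin * t = ∫ _ in (0:ℝ)..t, lmin := by
      simp [mul_comm]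
    rw [h1]
    exact intervalIntegral.integral_mono_on (μ := volume) ht intervalIntegrable_const
      ((hΛint y i).intervalIntegrable (μ := volume) _ _) fun x _ => (hlam_bd _).1
  have hexpint : ∀ b : ℝ, 0 < b → ∫ t in Ioi (0:ℝ), exp (-(b * t)) = b⁻¹ := by
    intro b hb
    have h := integral_comp_mul_right_Ioi (fun x => exp (-x)) 0 hb
    simp only [zero_mul, integral_exp_neg_Ioi, neg_zero, Real.exp_zero, smul_eq_mul,
      mul_one] at h
    rw [← h]
    refine setIntegral_congr_fun measurableSet_Ioi fun x _ => by rw [mul_comm]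
  have hexpint' : ∀ b : ℝ, 0 < b → IntegrableOn (fun t => exp (-(b * t))) (Ioi (0:ℝ)) := by
    intro b hb
    simpa [neg_mul] using exp_neg_integrableOn_Ioi 0 hb
  obtain ⟨g, hgdef⟩ : ∃ f : Y → I → ℝ → ℝ, f = fun y i t =>
    L * dist y ystar * exp ((α - lmin) * t) + exp (-(lmin * t)) * dist (S i t ystar) ystar :=
    ⟨_, rfl⟩
  have hg1int : ∀ y : Y, IntegrableOn
      (fun t : ℝ => L * dist y ystar * exp ((α - lmin) * t)) (Ioi 0) := by
    intro y
    have h1 : (fun t : ℝ => L * dist y ystar * exp ((α - lmin) * t)) =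
        fun t : ℝ => L * dist y ystar * exp (-((lmin - α) * t)) := by
      funext t; congr 1; congr 1; ring
    rw [h1]
    exact (hexpint' (lmin - α) (by linarith)).const_mul _
  have hg_int : ∀ y (i : I), IntegrableOn (g y i) (Ioi 0) := by
    intro y i
    rw [hgdef]
    exact (hg1int y).add (hA48 i)
  have hg_nonneg : ∀ y (i : I) (t : ℝ), 0 ≤ g y i t := by
    intro y i t
    rw [hgdef]
    exact add_nonneg (mul_nonneg (mul_nonneg hL.le dist_nonneg) (exp_pos _).le)
      (mul_nonneg (exp_pos _).le dist_nonneg)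
  have hg_val : ∀ y (i : I), ∫ t in Ioi (0:ℝ), g y i t ≤ L / (lmin - α) * dist y ystar + β := by
    intro y i
    simp only [hgdef]
    rw [integral_add (hg1int y) (hA48 i)]
    have e1 : ∫ t in Ioi (0:ℝ), L * dist y ystar * exp ((α - lmin) * t)
        = L * dist y ystar * (lmin - α)⁻¹ := by
      rw [integral_const_mul]
      congr 1
      calc ∫ t in Ioi (0:ℝ), exp ((α - lmin) * t)
          = ∫ t in Ioi (0:ℝ), exp (-((lmin - α) * t)) := by
            refine setIntegral_congr_fun measurableSet_Ioi fun t _ => ?_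
            congr 1; ring
        _ = (lmin - α)⁻¹ := hexpint (lmin - α) (by linarith)
    rw [e1]
    have := hβle i
    have e2 : L * dist y ystar * (lmin - α)⁻¹ = L / (lmin - α) * dist y ystar := by ring
    linarith
  have hg_pt : ∀ y (i : I), ∀ t ∈ Ioi (0:ℝ),
      exp (-(cumInt S lam y i t)) * dist (S i t y) ystar ≤ g y i t := by
    intro y i t ht
    have ht' : (0:ℝ) ≤ t := le_of_lt ht
    have h1 : exp (-(cumInt S lam y i t)) ≤ exp (-(lmin * t)) :=
      exp_le_exp.mpr (neg_le_neg (hΛge y i t ht'))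
    have h2 : dist (S i t y) ystar ≤ L * exp (α * t) * dist y ystar + dist (S i t ystar) ystar :=
      (dist_triangle _ (S i t ystar) _).trans (by have := hA49 y ystar i t ht'; linarith)
    calc exp (-(cumInt S lam y i t)) * dist (S i t y) ystar
        ≤ exp (-(lmin * t)) * (L * exp (α * t) * dist y ystar + dist (S i t ystar) ystar) :=
          mul_le_mul h1 h2 dist_nonneg (exp_pos _).le
      _ = g y i t := by
          simp only [hgdef]
          rw [mul_add]
          congr 1
          rw [show exp (-(lmin * t)) * (L * exp (α * t) * dist y ystar)
              = L * dist y ystar * (exp (-(lmin * t)) * exp (α * t)) by ring, ← Real.exp_add]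
          congr 2
          ring
  have part1 : ∀ y i, ∫ t in Ioi (0:ℝ), exp (-(cumInt S lam y i t)) * dist (S i t y) ystar ≤
      L / (lmin - α) * dist y ystar + β := by
    intro y i
    refine le_trans (integral_mono_of_nonneg ?_ (hg_int y i) ?_) (hg_val y i)
    · exact Filter.Eventually.of_forall fun t => mul_nonneg (exp_pos _).le dist_nonneg
    · exact (ae_restrict_iff' measurableSet_Ioi).mpr
        (Filter.Eventually.of_forall (hg_pt y i))
  -- measurability infrastructure
  obtain ⟨φ, hφdef⟩ : ∃ f : (Y × I) → ℝ → (Y × I),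
      f = fun x t => (S x.2 (max t 0) x.1, x.2) := ⟨_, rfl⟩
  have hφm : Measurable fun q : (Y × I) × ℝ => φ q.1 q.2 := by
    simp only [hφdef]
    have hF : Measurable fun q : (Y × ℝ) × I => ((S q.2 (max q.1.2 0) q.1.1 : Y), q.2) :=
      measurable_from_prod_countable_left fun i =>
        (((hSc i).comp (continuous_snd.prodMk continuous_fst)).prodMk
          continuous_const).measurable
    exact hF.comp ((measurable_fst.fst.prodMk measurable_snd).prodMk measurable_fst.snd)
  have hφx : ∀ x : Y × I, Measurable (φ x) := fun x =>
    hφm.comp (measurable_const.prodMk measurable_id)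
  have hΛm : Measurable fun q : (Y × I) × ℝ => Λ' q.1.1 q.1.2 q.2 := by
    have hF : Measurable fun q : (Y × ℝ) × I => Λ' q.1.1 q.2 q.1.2 :=
      measurable_from_prod_countable_left fun i => (hΛcont i).measurable
    exact hF.comp ((measurable_fst.fst.prodMk measurable_snd).prodMk measurable_fst.snd)
  obtain ⟨dens, hdensdef⟩ : ∃ f : (Y × I) → ℝ → ENNReal,
      f = fun x t => ENNReal.ofReal (exp (-(Λ' x.1 x.2 t))) := ⟨_, rfl⟩
  have hdensm : Measurable fun q : (Y × I) × ℝ => dens q.1 q.2 := by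
    simp only [hdensdef]
    exact ENNReal.measurable_ofReal.comp (Real.measurable_exp.comp hΛm.neg)
  have hdensx : ∀ x, Measurable (dens x) := fun x =>
    hdensm.comp (measurable_const.prodMk measurable_id)
  obtain ⟨κ, hκdef⟩ : ∃ k : (Y × I) → Measure (Y × I),
      k = fun x => Measure.map (φ x) ((volume.restrict (Ioi 0)).withDensity (dens x)) :=
    ⟨_, rfl⟩
  have hκ_apply : ∀ (x : Y × I) (A : Set (Y × I)), MeasurableSet A →
      κ x A = ∫⁻ t in Ioi (0:ℝ), A.indicator (fun _ => (1:ENNReal)) (φ x t) * dens x t := by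
    intro x A hA
    simp only [hκdef]
    rw [Measure.map_apply (hφx x) hA, withDensity_apply _ ((hφx x) hA),
      ← lintegral_indicator ((hφx x) hA)]
    refine lintegral_congr fun t => ?_
    by_cases h : φ x t ∈ A
    · simp [Set.indicator_of_mem, h, Set.indicator_of_mem (mem_preimage.mpr h)]
    · simp [Set.indicator_of_notMem, h,
        Set.indicator_of_notMem (fun hc => h (mem_preimage.mp hc))]
  have hκm : Measurable κ := by
    refine Measure.measurable_of_measurable_coe _ fun A hA => ?_
    have hrw : (fun x => κ x A) =
        fun x => ∫⁻ t in Ioi (0:ℝ), A.indicator (fun _ => (1:ENNReal)) (φ x t) * dens x t :=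
      funext fun x => hκ_apply x A hA
    rw [hrw]
    exact Measurable.lintegral_prod_right'
      (((measurable_const.indicator hA).comp hφm).mul hdensm)
  have hκ_univ : ∀ x, κ x univ ≤ ENNReal.ofReal lmin⁻¹ := by
    intro x
    rw [hκ_apply x univ MeasurableSet.univ]
    have hb : (∫⁻ t in Ioi (0:ℝ), univ.indicator (fun _ => (1:ENNReal)) (φ x t) * dens x t) ≤
        ∫⁻ t in Ioi (0:ℝ), ENNReal.ofReal (exp (-(lmin * t))) := by
      refine lintegral_mono_ae ((ae_restrict_iff' measurableSet_Ioi).mpr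
        (Filter.Eventually.of_forall fun t ht => ?_))
      have h1 : lmin * t ≤ Λ' x.1 x.2 t :=
        (hΛeq x.1 x.2 t (le_of_lt ht)) ▸ hΛge x.1 x.2 t (le_of_lt ht)
      simp only [Set.indicator_univ, one_mul, hdensdef]
      exact ENNReal.ofReal_le_ofReal (exp_le_exp.mpr (neg_le_neg h1))
    refine hb.trans (le_of_eq ?_)
    rw [← ofReal_integral_eq_lintegral_ofReal (hexpint' lmin hlmin)
      (Filter.Eventually.of_forall fun t => (exp_pos _).le), hexpint lmin hlmin]
  have hGtilEq : ∀ (x : Y × I) (A : Set (Y × I)), MeasurableSet A →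
      Gtil S lam x A = (κ x A).toReal := by
    intro x A hA
    have hstep1 : Gtil S lam x A = ∫ t in Ioi (0:ℝ),
        exp (-(Λ' x.1 x.2 t)) * A.indicator (fun _ => (1:ℝ)) (φ x t) := by
      unfold Gtil
      refine setIntegral_congr_fun measurableSet_Ioi fun t ht => ?_
      simp only [hφdef]
      rw [max_eq_left (le_of_lt ht), hΛeq x.1 x.2 t (le_of_lt ht)]
    have hmeas : Measurable fun t : ℝ =>
        exp (-(Λ' x.1 x.2 t)) * A.indicator (fun _ => (1:ℝ)) (φ x t) := by
      refine Measurable.mul ?_ ((measurable_const.indicator hA).comp (hφx x))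
      exact Real.measurable_exp.comp
        (((hΛcont x.2).comp (continuous_const.prodMk continuous_id)).measurable.neg)
    rw [hstep1, integral_eq_lintegral_of_nonneg_ae
      (Filter.Eventually.of_forall fun t =>
        mul_nonneg (exp_pos _).le (Set.indicator_nonneg (fun _ _ => zero_le_one) _))
      hmeas.aestronglyMeasurable]
    congr 1
    rw [hκ_apply x A hA]
    refine lintegral_congr fun t => ?_
    by_cases h : φ x t ∈ A
    · simp [Set.indicator_of_mem h, hdensdef, mul_comm]
    · simp [Set.indicator_of_notMem h]
  have hVm : Measurable fun z : Y × I => ENNReal.ofReal (dist z.1 ystar) :=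
    ENNReal.measurable_ofReal.comp (continuous_fst.dist continuous_const).measurable
  have hκV : ∀ x : Y × I, (∫⁻ z, ENNReal.ofReal (dist z.1 ystar) ∂(κ x)) ≤
      ENNReal.ofReal (L / (lmin - α) * dist x.1 ystar + β) := by
    intro x
    simp only [hκdef]
    have hgm : Measurable fun t : ℝ => ENNReal.ofReal (dist (φ x t).1 ystar) :=
      hVm.comp (hφx x)
    rw [lintegral_map hVm (hφx x), lintegral_withDensity_eq_lintegral_mul _ (hdensx x) hgm]
    have hle : (∫⁻ t in Ioi (0:ℝ),
        (dens x * fun t => ENNReal.ofReal (dist (φ x t).1 ystar)) t) ≤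
        ∫⁻ t in Ioi (0:ℝ), ENNReal.ofReal (g x.1 x.2 t) := by
      refine lintegral_mono_ae ((ae_restrict_iff' measurableSet_Ioi).mpr
        (Filter.Eventually.of_forall fun t ht => ?_))
      have hmax : max t 0 = t := max_eq_left (le_of_lt ht)
      simp only [Pi.mul_apply, hdensdef, hφdef, hmax]
      rw [← ENNReal.ofReal_mul (exp_pos _).le]
      refine ENNReal.ofReal_le_ofReal ?_
      rw [← hΛeq x.1 x.2 t (le_of_lt ht)]
      exact hg_pt x.1 x.2 t ht
    refine hle.trans ?_
    rw [← ofReal_integral_eq_lintegral_ofReal (hg_int x.1 x.2)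
      (Filter.Eventually.of_forall fun t => hg_nonneg x.1 x.2 t)]
    exact ENNReal.ofReal_le_ofReal (hg_val x.1 x.2)
  refine ⟨part1, ?_⟩
  intro μ hμ hVμ ν hνfin hν
  have hbind : ν = μ.bind κ := by
    refine Measure.ext fun A hA => ?_
    have h1 : (ν A).toReal = (∫⁻ x, κ x A ∂μ).toReal := by
      rw [hν A hA,
        show (fun x => Gtil S lam x A) = fun x => (κ x A).toReal from
          funext fun x => hGtilEq x A hA]
      exact integral_toReal ((Measure.measurable_coe hA).comp hκm).aemeasurable
        (Filter.Eventually.of_forall fun x => lt_of_le_of_lt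
          ((measure_mono (subset_univ _)).trans (hκ_univ x)) ENNReal.ofReal_lt_top)
    have h2 : (∫⁻ x, κ x A ∂μ) ≠ ⊤ := by
      refine ne_of_lt (lt_of_le_of_lt (lintegral_mono fun x =>
        (measure_mono (subset_univ _)).trans (hκ_univ x)) ?_)
      rw [lintegral_const]
      exact ENNReal.mul_lt_top ENNReal.ofReal_lt_top (measure_lt_top μ univ)
    rw [Measure.bind_apply hA hκm.aemeasurable]
    exact (ENNReal.toReal_eq_toReal_iff' (measure_ne_top ν A) h2).mp h1
  have hlintν : (∫⁻ z, ENNReal.ofReal (dist z.1 ystar) ∂ν) ≤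
      ENNReal.ofReal (L / (lmin - α) * (∫ x : Y × I, dist x.1 ystar ∂μ) + β) := by
    rw [hbind, Measure.lintegral_bind hκm.aemeasurable hVm.aemeasurable]
    refine le_trans (lintegral_mono fun x => hκV x) ?_
    have hint : Integrable (fun x : Y × I => L / (lmin - α) * dist x.1 ystar + β) μ :=
      (hVμ.const_mul _).add (integrable_const β)
    rw [← ofReal_integral_eq_lintegral_ofReal hint
      (Filter.Eventually.of_forall fun x => add_nonneg (mul_nonneg hc0 dist_nonneg) hβ0)]
    refine ENNReal.ofReal_le_ofReal (le_of_eq ?_)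
    rw [integral_add (hVμ.const_mul _) (integrable_const β), integral_const_mul,
      integral_const]
    simp [measure_univ]
  have hVcont : Continuous fun x : Y × I => dist x.1 ystar :=
    continuous_fst.dist continuous_const
  have hIntν : Integrable (fun x : Y × I => dist x.1 ystar) ν := by
    refine ⟨hVcont.aestronglyMeasurable, ?_⟩
    rw [hasFiniteIntegral_iff_ofReal (Filter.Eventually.of_forall fun x => dist_nonneg)]
    exact lt_of_le_of_lt hlintν ENNReal.ofReal_lt_top
  refine ⟨hIntν, ?_, ?_⟩
  · rw [integral_eq_lintegral_of_nonneg_ae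
      (Filter.Eventually.of_forall fun x => dist_nonneg) hVcont.aestronglyMeasurable]
    exact ENNReal.toReal_le_of_le_ofReal
      (add_nonneg (mul_nonneg hc0 (integral_nonneg fun x => dist_nonneg)) hβ0) hlintν
  · by_cases h0 : ν univ = 0
    · have hν0 : ν = 0 := Measure.measure_univ_eq_zero.mp h0
      rw [hν0]
      simp [integrable_zero_measure]
    · exact hIntν.smul_measure (ENNReal.inv_ne_top.mpr h0)
end
end

section
/- If the kernel J is Feller (i.e. y ↦ ∫_Y f(u) J(y,du) is bounded continuous for every bounded continuous f : Y → ℝ), then the kernel P is Feller: for every bounded continuous f : X → ℝ, the function (y,i) ↦ ∫_X f dP((y,i),·) = ∫₀^∞ λ(S_i(t,y)) e^{−Λ(y,i,t)} ∫_Y Σ_{j∈I} π_{ij}(u) f(u,j) J(S_i(t,y),du) dt is bounded and continuous on X. -/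
open MeasureTheory ProbabilityTheory Real Set Filter Topology

noncomputable section

/-- Auxiliary: a function on `Y × I` with `I` discrete is continuous if each slice is. -/
theorem continuous_of_discrete_slices {Y I : Type*} [TopologicalSpace Y] [TopologicalSpace I]
    [DiscreteTopology I] {F : Y × I → ℝ} (h : ∀ i, Continuous fun y => F (y, i)) :
    Continuous F := by
  rw [continuous_iff_continuousAt]
  rintro ⟨y, i⟩
  have hmem : (univ ×ˢ ({i} : Set I)) ∈ 𝓝 ((y, i) : Y × I) :=
    prod_mem_nhds univ_mem ((isOpen_discrete _).mem_nhds rfl)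
  have heq : (fun p : Y × I => F (p.1, i)) =ᶠ[𝓝 ((y, i) : Y × I)] F := by
    filter_upwards [hmem] with p hp
    have : p.2 = i := hp.2
    rw [← this]
  exact (((h i).comp continuous_fst).continuousAt).congr heq

theorem Pker_feller
    {Y : Type*} [MetricSpace Y] [TopologicalSpace.SeparableSpace Y] [CompleteSpace Y]
    [MeasurableSpace Y] [BorelSpace Y]
    {I : Type*} [Fintype I] [Nonempty I] [TopologicalSpace I] [DiscreteTopology I]
    [MeasurableSpace I] [MeasurableSingletonClass I]
    (S : I → ℝ → Y → Y)
    (hS_cont : ∀ i, ContinuousOn (fun p : ℝ × Y => S i p.1 p.2) (Ici (0:ℝ) ×ˢ (univ : Set Y)))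
    (hS_zero : ∀ i y, S i 0 y = y)
    (hS_add : ∀ i, ∀ s ≥ (0:ℝ), ∀ t ≥ (0:ℝ), ∀ y, S i (s + t) y = S i s (S i t y))
    (lam : Y → ℝ) (hlam_cont : Continuous lam) (lmin lmax : ℝ) (hlmin : 0 < lmin)
    (hlam_bd : ∀ y, lmin ≤ lam y ∧ lam y ≤ lmax)
    (pm : I → I → Y → ℝ) (hpm_cont : ∀ i j, Continuous (pm i j))
    (hpm_mem : ∀ i j y, pm i j y ∈ Icc (0:ℝ) 1) (hpm_sum : ∀ i y, ∑ j, pm i j y = 1)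
    (J : Kernel Y Y) [IsMarkovKernel J]
    (hJFeller : ∀ f : Y → ℝ, Continuous f → (∃ M, ∀ y, |f y| ≤ M) →
      Continuous (fun y => ∫ u, f u ∂(J y)) ∧ ∃ M, ∀ y, |∫ u, f u ∂(J y)| ≤ M) :
    ∀ f : Y × I → ℝ, Continuous f → (∃ M, ∀ x, |f x| ≤ M) →
      Continuous (fun x : Y × I =>
        ∫ t in Ioi (0:ℝ), lam (S x.2 t x.1) * exp (-(cumInt S lam x.1 x.2 t)) *
          Wop pm J f (S x.2 t x.1, x.2)) ∧
      ∃ M, ∀ x : Y × I,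
        |∫ t in Ioi (0:ℝ), lam (S x.2 t x.1) * exp (-(cumInt S lam x.1 x.2 t)) *
          Wop pm J f (S x.2 t x.1, x.2)| ≤ M := by
  intro f hf hfbd
  obtain ⟨M, hM⟩ := hfbd
  set M0 : ℝ := max M 0 with hM0def
  have hM0 : ∀ x, |f x| ≤ M0 := fun x => (hM x).trans (le_max_left _ _)
  have hM0nn : 0 ≤ M0 := le_max_right _ _
  -- the functions g i
  set g : I → Y → ℝ := fun i u => ∑ j, pm i j u * f (u, j) with hgdef
  have hg_cont : ∀ i, Continuous (g i) := by
    intro i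
    exact continuous_finset_sum _ fun j _ =>
      (hpm_cont i j).mul (hf.comp (continuous_id.prodMk continuous_const))
  have hg_bd : ∀ i u, |g i u| ≤ M0 := by
    intro i u
    calc |g i u| ≤ ∑ j, |pm i j u * f (u, j)| := Finset.abs_sum_le_sum_abs _ _
      _ ≤ ∑ j, pm i j u * M0 := by
          refine Finset.sum_le_sum fun j _ => ?_
          rw [abs_mul, abs_of_nonneg (hpm_mem i j u).1]
          exact mul_le_mul_of_nonneg_left (hM0 _) (hpm_mem i j u).1
      _ = M0 := by rw [← Finset.sum_mul, hpm_sum i u, one_mul]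
  -- Wop facts
  have hWeq : ∀ (i : I) (u : Y), Wop pm J f (u, i) = ∫ v, g i v ∂(J u) := fun i u => rfl
  have hW_cont : ∀ i, Continuous fun u => Wop pm J f (u, i) := by
    intro i
    exact (hJFeller (g i) (hg_cont i) ⟨M0, hg_bd i⟩).1
  have hW_bd : ∀ (i : I) (u : Y), |Wop pm J f (u, i)| ≤ M0 := by
    intro i u
    rw [hWeq, ← Real.norm_eq_abs]
    calc ‖∫ v, g i v ∂(J u)‖ ≤ ∫ _, M0 ∂(J u) :=
          norm_integral_le_of_norm_le (integrable_const M0)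
            (ae_of_all _ fun v => by rw [Real.norm_eq_abs]; exact hg_bd i v)
      _ = M0 := by simp
  -- extended (globally continuous) flow
  have hS'_cont : ∀ i, Continuous fun p : ℝ × Y => S i (max p.1 0) p.2 := by
    intro i
    exact (hS_cont i).comp_continuous
      ((continuous_fst.max continuous_const).prodMk continuous_snd)
      (fun p => Set.mk_mem_prod (Set.mem_Ici.2 (le_max_right _ _)) (mem_univ _))
  have hS'_eq : ∀ (i : I) (t : ℝ), 0 ≤ t → ∀ y, S i (max t 0) y = S i t y := by
    intro i t ht y; rw [max_eq_left ht]
  have hSt_cont : ∀ (i : I) (t : ℝ), 0 ≤ t → Continuous fun y => S i t y := by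
    intro i t ht
    exact ((hS'_cont i).comp (continuous_const.prodMk continuous_id)).congr
      fun y => by show S i (max t 0) y = S i t y; rw [max_eq_left ht]
  -- the extended integrand for cumInt
  have hlam'_cont : ∀ (i : I) (y : Y), Continuous fun h : ℝ => lam (S i (max h 0) y) := by
    intro i y
    exact hlam_cont.comp ((hS'_cont i).comp (continuous_id.prodMk continuous_const))
  have hcum_eq : ∀ (i : I) (y : Y) (t : ℝ), 0 ≤ t →
      cumInt S lam y i t = ∫ h in (0:ℝ)..t, lam (S i (max h 0) y) := by
    intro i y t ht
    refine intervalIntegral.integral_congr fun h hh => ?_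
    rw [uIcc_of_le ht] at hh
    rw [max_eq_left hh.1]
  have hcum_cont_t : ∀ (i : I) (y : Y),
      Continuous fun t => ∫ h in (0:ℝ)..t, lam (S i (max h 0) y) :=
    fun i y => intervalIntegral.continuous_primitive
      (fun a b => (hlam'_cont i y).intervalIntegrable a b) 0
  have hcum_ge : ∀ (i : I) (y : Y) (t : ℝ), 0 ≤ t → lmin * t ≤ cumInt S lam y i t := by
    intro i y t ht
    rw [hcum_eq i y t ht]
    have h1 : (∫ _ in (0:ℝ)..t, lmin) ≤ ∫ h in (0:ℝ)..t, lam (S i (max h 0) y) :=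
      intervalIntegral.integral_mono_on ht intervalIntegrable_const
        ((hlam'_cont i y).intervalIntegrable 0 t) (fun h _ => (hlam_bd _).1)
    simpa [mul_comm] using h1
  have hlam_abs : ∀ z : Y, |lam z| ≤ lmax := by
    intro z
    rw [abs_of_pos (lt_of_lt_of_le hlmin (hlam_bd z).1)]
    exact (hlam_bd z).2
  -- continuity of cumInt in y (t ≥ 0 fixed)
  have hcum_cont_y : ∀ (i : I) (t : ℝ), 0 ≤ t → Continuous fun y => cumInt S lam y i t := by
    intro i t ht
    have key : Continuous fun y => ∫ h in Ioc (0:ℝ) t, lam (S i (max h 0) y) := by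
      refine continuous_of_dominated (bound := fun _ => lmax) (fun y => ?_) (fun y => ?_) ?_ ?_
      · exact ((hlam'_cont i y).aestronglyMeasurable).restrict
      · exact ae_of_all _ fun h => by rw [Real.norm_eq_abs]; exact hlam_abs _
      · exact integrableOn_const measure_Ioc_lt_top.ne enorm_ne_top
      · exact ae_of_all _ fun h =>
          hlam_cont.comp ((hS'_cont i).comp (continuous_const.prodMk continuous_id))
    have : (fun y => cumInt S lam y i t) = fun y => ∫ h in Ioc (0:ℝ) t, lam (S i (max h 0) y) := by
      funext y
      rw [hcum_eq i y t ht, intervalIntegral.integral_of_le ht]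
    rw [this]
    exact key
  -- the integrand
  set F : Y × I → ℝ → ℝ := fun x t =>
    lam (S x.2 t x.1) * exp (-(cumInt S lam x.1 x.2 t)) * Wop pm J f (S x.2 t x.1, x.2)
    with hFdef
  set bound : ℝ → ℝ := fun t => lmax * exp (-lmin * t) * M0 with hbddef
  have hbound_int : IntegrableOn bound (Ioi (0:ℝ)) := by
    exact (((exp_neg_integrableOn_Ioi 0 hlmin).const_mul lmax).mul_const M0)
  have hFbd : ∀ x : Y × I, ∀ t ∈ Ioi (0:ℝ), ‖F x t‖ ≤ bound t := by
    rintro ⟨y, i⟩ t ht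
    have ht' : (0:ℝ) ≤ t := le_of_lt ht
    have h1 : |lam (S i t y)| ≤ lmax := hlam_abs _
    have h2 : |exp (-(cumInt S lam y i t))| ≤ exp (-lmin * t) := by
      rw [abs_of_pos (exp_pos _)]
      apply exp_le_exp.2
      rw [neg_mul, neg_le_neg_iff]
      exact hcum_ge i y t ht'
    have h3 : |Wop pm J f (S i t y, i)| ≤ M0 := hW_bd i _
    rw [Real.norm_eq_abs]
    calc |F (y, i) t| = |lam (S i t y)| * |exp (-(cumInt S lam y i t))| *
          |Wop pm J f (S i t y, i)| := by rw [hFdef]; simp [abs_mul]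
      _ ≤ lmax * exp (-lmin * t) * M0 := by
          exact mul_le_mul (mul_le_mul h1 h2 (abs_nonneg _) ((abs_nonneg _).trans h1)) h3
            (abs_nonneg _)
            (mul_nonneg ((abs_nonneg _).trans h1) ((abs_nonneg _).trans h2))
  have hF_meas : ∀ x : Y × I, AEStronglyMeasurable (F x) (volume.restrict (Ioi (0:ℝ))) := by
    rintro ⟨y, i⟩
    have hc : ContinuousOn (F (y, i)) (Ioi (0:ℝ)) := by
      have c1 : ContinuousOn (fun t => S i t y) (Ioi (0:ℝ)) := by
        refine ContinuousOn.congr (f := fun t => S i (max t 0) y) ?_ ?_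
        · exact ((hS'_cont i).comp (continuous_id.prodMk continuous_const)).continuousOn
        · intro t ht; show S i t y = S i (max t 0) y; rw [max_eq_left (le_of_lt ht)]
      have c2 : ContinuousOn (fun t => cumInt S lam y i t) (Ioi (0:ℝ)) := by
        refine ContinuousOn.congr (f := fun t => ∫ h in (0:ℝ)..t, lam (S i (max h 0) y)) ?_ ?_
        · exact (hcum_cont_t i y).continuousOn
        · intro t ht; exact hcum_eq i y t (le_of_lt ht)
      exact ((hlam_cont.comp_continuousOn c1).mul
        ((continuous_exp.comp continuous_neg).comp_continuousOn c2)).mul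
        ((hW_cont i).comp_continuousOn c1)
    exact hc.aestronglyMeasurable measurableSet_Ioi
  have hF_cont : ∀ t ∈ Ioi (0:ℝ), Continuous fun x => F x t := by
    intro t ht
    refine continuous_of_discrete_slices fun i => ?_
    have c1 : Continuous fun y => S i t y := hSt_cont i t (le_of_lt ht)
    exact ((hlam_cont.comp c1).mul
      ((continuous_exp.comp continuous_neg).comp (hcum_cont_y i t (le_of_lt ht)))).mul
      ((hW_cont i).comp c1)
  constructor
  · refine continuous_of_dominated hF_meas (fun x => ?_) hbound_int ?_
    · exact (ae_restrict_iff' measurableSet_Ioi).2 (ae_of_all _ (hFbd x))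
    · exact (ae_restrict_iff' measurableSet_Ioi).2 (ae_of_all _ hF_cont)
  · refine ⟨∫ t in Ioi (0:ℝ), bound t, fun x => ?_⟩
    rw [← Real.norm_eq_abs]
    exact norm_integral_le_of_norm_le hbound_int
      ((ae_restrict_iff' measurableSet_Ioi).2 (ae_of_all _ (hFbd x)))
end
end

section
/- Suppose Assumption 4.4 holds. Then for every bounded continuous f : X → ℝ and every x = (y,i) ∈ X, the map (t,T) ↦ ψ_f(x,t,T) is jointly continuous on D_ψ := {(t,T) ∈ [0,∞)² : t ≤ T}, where ψ_f((y,i),t,T) := λ(S_i(t,y)) e^{−Λ(y,i,t)} ∫_Y Σ_{j∈I} π_{ij}(u) e^{−Λ(u,j,T−t)} f(S_j(T−t,u),j) J(S_i(t,y),du). -/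
open MeasureTheory ProbabilityTheory Real Set Filter Topology

noncomputable section

/-- Semiflow extended to all of `ℝ` by clamping time at `0`. -/
def Sx {Y I : Type*} (S : I → ℝ → Y → Y) (j : I) (h : ℝ) (u : Y) : Y := S j (max h 0) u

theorem psi_jointly_continuous
    {Y : Type*} [MetricSpace Y] [TopologicalSpace.SeparableSpace Y] [CompleteSpace Y]
    [MeasurableSpace Y] [BorelSpace Y]
    {I : Type*} [Fintype I] [Nonempty I] [TopologicalSpace I] [DiscreteTopology I]
    [MeasurableSpace I] [MeasurableSingletonClass I]
    (S : I → ℝ → Y → Y)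
    (hS_cont : ∀ i, ContinuousOn (fun p : ℝ × Y => S i p.1 p.2) (Ici (0:ℝ) ×ˢ (univ : Set Y)))
    (hS_zero : ∀ i y, S i 0 y = y)
    (hS_add : ∀ i, ∀ s ≥ (0:ℝ), ∀ t ≥ (0:ℝ), ∀ y, S i (s + t) y = S i s (S i t y))
    (lam : Y → ℝ) (hlam_cont : Continuous lam) (lmin lmax : ℝ) (hlmin : 0 < lmin)
    (hlam_bd : ∀ y, lmin ≤ lam y ∧ lam y ≤ lmax)
    (pm : I → I → Y → ℝ) (hpm_cont : ∀ i j, Continuous (pm i j))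
    (hpm_mem : ∀ i j y, pm i j y ∈ Icc (0:ℝ) 1) (hpm_sum : ∀ i y, ∑ j, pm i j y = 1)
    (J : Kernel Y Y) [IsMarkovKernel J]
    (h44 : ∀ g : Y × ℝ → ℝ, (∃ M, ∀ q, |g q| ≤ M) →
      ContinuousOn g ((univ : Set Y) ×ˢ Ici (0:ℝ)) →
      ContinuousOn (fun q : Y × ℝ => ∫ u, g (u, q.2) ∂(J q.1))
        ((univ : Set Y) ×ˢ Ici (0:ℝ)))
    (f : Y × I → ℝ) (hf_cont : Continuous f) (hf_bdd : ∃ M, ∀ x, |f x| ≤ M) :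
    ∀ x : Y × I,
      ContinuousOn (fun q : ℝ × ℝ => psiF S lam pm J f x q.1 q.2)
        {q : ℝ × ℝ | 0 ≤ q.1 ∧ q.1 ≤ q.2} := by
  intro x
  obtain ⟨y, i⟩ := x
  obtain ⟨M, hM⟩ := hf_bdd
  have hSx_cont : ∀ j, Continuous (fun p : ℝ × Y => Sx S j p.1 p.2) := by
    intro j
    have hmax : Continuous (fun p : ℝ × Y => (max p.1 0, p.2)) :=
      (continuous_fst.max continuous_const).prodMk continuous_snd
    exact (hS_cont j).comp_continuous hmax (fun p => ⟨Set.mem_Ici.2 (le_max_right _ _), trivial⟩)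
  have hSx_eq : ∀ j (h : ℝ), 0 ≤ h → ∀ u, Sx S j h u = S j h u := by
    intro j h hh u; simp [Sx, max_eq_left hh]
  have hcum_cont : ∀ j, Continuous (fun p : Y × ℝ => cumInt (Sx S) lam p.1 j p.2) := by
    intro j
    have h1 : Continuous (Function.uncurry (fun (u : Y) (h : ℝ) => lam (Sx S j h u))) := by
      exact hlam_cont.comp ((hSx_cont j).comp (continuous_snd.prodMk continuous_fst))
    exact intervalIntegral.continuous_parametric_primitive_of_continuous h1
  have hcum_eq : ∀ j u (s : ℝ), 0 ≤ s → cumInt (Sx S) lam u j s = cumInt S lam u j s := by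
    intro j u s hs
    apply intervalIntegral.integral_congr
    intro h hh
    rw [uIcc_of_le hs] at hh
    simp only [hSx_eq j h hh.1]
  have hcum_nonneg : ∀ j u (s : ℝ), 0 ≤ s → 0 ≤ cumInt (Sx S) lam u j s := by
    intro j u s hs
    exact intervalIntegral.integral_nonneg hs
      (fun h _ => le_trans hlmin.le (hlam_bd _).1)
  set g : Y × ℝ → ℝ := fun q => ∑ j, pm i j q.1 *
      Real.exp (-(cumInt (Sx S) lam q.1 j (max q.2 0))) * f (Sx S j q.2 q.1, j) with hg
  have hg_cont : Continuous g := by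
    apply continuous_finset_sum
    intro j _
    refine (((hpm_cont i j).comp continuous_fst).mul ?_).mul ?_
    · exact Real.continuous_exp.comp
        (((hcum_cont j).comp
          (continuous_fst.prodMk (continuous_snd.max continuous_const))).neg)
    · exact hf_cont.comp
        (((hSx_cont j).comp (continuous_snd.prodMk continuous_fst)).prodMk
          continuous_const)
  have hg_bdd : ∀ q, |g q| ≤ (Fintype.card I : ℝ) * M := by
    intro q
    calc |g q| ≤ ∑ j, |pm i j q.1 *
        Real.exp (-(cumInt (Sx S) lam q.1 j (max q.2 0))) * f (Sx S j q.2 q.1, j)| :=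
          Finset.abs_sum_le_sum_abs _ _
      _ ≤ ∑ _j : I, M := by
          apply Finset.sum_le_sum
          intro j _
          have h1 : |pm i j q.1| ≤ 1 :=
            abs_le.2 ⟨by linarith [(hpm_mem i j q.1).1], (hpm_mem i j q.1).2⟩
          have h2 : |Real.exp (-(cumInt (Sx S) lam q.1 j (max q.2 0)))| ≤ 1 := by
            rw [abs_of_pos (Real.exp_pos _)]
            exact Real.exp_le_one_iff.2
              (neg_nonpos.2 (hcum_nonneg j q.1 _ (le_max_right _ _)))
          have h3 : |f (Sx S j q.2 q.1, j)| ≤ M := hM _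
          calc |pm i j q.1 * Real.exp (-(cumInt (Sx S) lam q.1 j (max q.2 0))) *
                f (Sx S j q.2 q.1, j)|
              = |pm i j q.1| * |Real.exp (-(cumInt (Sx S) lam q.1 j (max q.2 0)))| *
                |f (Sx S j q.2 q.1, j)| := by rw [abs_mul, abs_mul]
            _ ≤ 1 * 1 * M := by gcongr <;> assumption
            _ = M := by ring
      _ = (Fintype.card I : ℝ) * M := by
          rw [Finset.sum_const, Finset.card_univ, nsmul_eq_mul]
  have hΦ := h44 g ⟨(Fintype.card I : ℝ) * M, hg_bdd⟩ hg_cont.continuousOn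
  have hmap : Continuous (fun q : ℝ × ℝ => Sx S i q.1 y) :=
    (hSx_cont i).comp (continuous_fst.prodMk continuous_const)
  have hc1 : Continuous (fun q : ℝ × ℝ => lam (Sx S i q.1 y)) := hlam_cont.comp hmap
  have hc2 : Continuous (fun q : ℝ × ℝ => Real.exp (-(cumInt (Sx S) lam y i q.1))) :=
    Real.continuous_exp.comp
      (((hcum_cont i).comp (continuous_const.prodMk continuous_fst)).neg)
  have hc3 : ContinuousOn
      (fun q : ℝ × ℝ => ∫ u, g (u, q.2 - q.1) ∂(J (Sx S i q.1 y)))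
      {q : ℝ × ℝ | 0 ≤ q.1 ∧ q.1 ≤ q.2} := by
    have hmap2 : Continuous (fun q : ℝ × ℝ => (Sx S i q.1 y, q.2 - q.1)) :=
      hmap.prodMk (continuous_snd.sub continuous_fst)
    exact hΦ.comp hmap2.continuousOn
      (fun q hq => ⟨trivial, sub_nonneg.2 hq.2⟩)
  refine (((hc1.mul hc2).continuousOn.mul hc3)).congr ?_
  intro q hq
  obtain ⟨ht, htT⟩ := hq
  have hTt : (0:ℝ) ≤ q.2 - q.1 := sub_nonneg.2 htT
  have hmaxTt : max (q.2 - q.1) (0:ℝ) = q.2 - q.1 := max_eq_left hTt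
  have hint : ∀ u : Y, (∑ j, pm i j u * Real.exp (-(cumInt S lam u j (q.2 - q.1))) *
      f (S j (q.2 - q.1) u, j)) = g (u, q.2 - q.1) := by
    intro u
    simp only [hg]
    refine Finset.sum_congr rfl fun j _ => ?_
    rw [hmaxTt, hcum_eq j u _ hTt, hSx_eq j _ hTt]
  simp only [psiF]
  rw [← hSx_eq i q.1 ht y, ← hcum_eq i y q.1 ht]
  congr 1
  simp only [hint]
end
end

section
/- The semigroup {P_T}_{T≥0} is stochastically continuous: for every bounded continuous f : X → ℝ and every x ∈ X, lim_{T→0+} P_T f(x) = f(x). -/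
open MeasureTheory ProbabilityTheory Real Set Filter Topology

noncomputable section

theorem PT_stochastically_continuous
    {Y : Type*} [MetricSpace Y] [TopologicalSpace.SeparableSpace Y] [CompleteSpace Y]
    [MeasurableSpace Y] [BorelSpace Y]
    {I : Type*} [Fintype I] [Nonempty I] [TopologicalSpace I] [DiscreteTopology I]
    [MeasurableSpace I] [MeasurableSingletonClass I]
    (S : I → ℝ → Y → Y)
    (hS_cont : ∀ i, ContinuousOn (fun p : ℝ × Y => S i p.1 p.2) (Ici (0:ℝ) ×ˢ (univ : Set Y)))
    (hS_zero : ∀ i y, S i 0 y = y)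
    (hS_add : ∀ i, ∀ s ≥ (0:ℝ), ∀ t ≥ (0:ℝ), ∀ y, S i (s + t) y = S i s (S i t y))
    (lam : Y → ℝ) (hlam_cont : Continuous lam) (lmin lmax : ℝ) (hlmin : 0 < lmin)
    (hlam_bd : ∀ y, lmin ≤ lam y ∧ lam y ≤ lmax)
    (pm : I → I → Y → ℝ) (hpm_cont : ∀ i j, Continuous (pm i j))
    (hpm_mem : ∀ i j y, pm i j y ∈ Icc (0:ℝ) 1) (hpm_sum : ∀ i y, ∑ j, pm i j y = 1)
    (J : Kernel Y Y) [IsMarkovKernel J]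
    (Pbar : Kernel (Y × I × ℝ) (Y × I × ℝ)) [IsMarkovKernel Pbar]
    (hPbar : ∀ y i, ∀ s ≥ (0:ℝ), ∀ A : Set (Y × I × ℝ), MeasurableSet A →
      ((Pbar (y, i, s)) A).toReal =
        ∫ t in Ioi (0:ℝ), lam (S i t y) * exp (-(cumInt S lam y i t)) *
          ∫ u, ∑ j, pm i j u * A.indicator (fun _ => (1:ℝ)) (u, j, s + t) ∂(J (S i t y))) :
    ∀ f : Y × I → ℝ, Continuous f → (∃ M, ∀ x, |f x| ≤ M) →
      ∀ x : Y × I, Tendsto (fun T => PTf S Pbar f T x) (𝓝[>] (0:ℝ)) (𝓝 (f x)) := by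
  intro f hf_cont hf_bd x
  obtain ⟨M₀, hM₀⟩ := hf_bd
  set M : ℝ := max M₀ 0 with hMdef
  have hM : ∀ z, |f z| ≤ M := fun z => (hM₀ z).trans (le_max_left _ _)
  have hM0 : (0:ℝ) ≤ M := le_max_right _ _
  have hlmax : (0:ℝ) < lmax := lt_of_lt_of_le hlmin ((hlam_bd x.1).1.trans (hlam_bd x.1).2)
  have hAmeas : ∀ T : ℝ, MeasurableSet {w : Y × I × ℝ | w.2.2 ≤ T} := fun T =>
    measurable_snd.snd measurableSet_Iic
  have hAmeas' : ∀ T : ℝ, MeasurableSet {w : Y × I × ℝ | T < w.2.2} := fun T =>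
    measurable_snd.snd measurableSet_Ioi
  -- K1 : mass never moves backwards in the clock variable
  have K1 : ∀ z : Y × I × ℝ, 0 ≤ z.2.2 → Pbar z {w | w.2.2 ≤ z.2.2} = 0 := by
    intro z hz
    have h : (Pbar z {w | w.2.2 ≤ z.2.2}).toReal
        = ∫ t in Ioi (0:ℝ), lam (S z.2.1 t z.1) * exp (-(cumInt S lam z.1 z.2.1 t)) *
          ∫ u, ∑ j, pm z.2.1 j u *
            ({w : Y × I × ℝ | w.2.2 ≤ z.2.2}).indicator (fun _ => (1:ℝ)) (u, j, z.2.2 + t)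
              ∂(J (S z.2.1 t z.1)) :=
      hPbar z.1 z.2.1 z.2.2 hz {w | w.2.2 ≤ z.2.2} (hAmeas z.2.2)
    have h0 : (Pbar z {w | w.2.2 ≤ z.2.2}).toReal = 0 := by
      rw [h, setIntegral_congr_fun measurableSet_Ioi (g := fun _ => (0:ℝ)), integral_zero]
      intro t ht
      have hind : ∀ (u : Y) (j : I),
          ({w : Y × I × ℝ | w.2.2 ≤ z.2.2}).indicator (fun _ => (1:ℝ)) (u, j, z.2.2 + t) = 0 := by
        intro u j
        apply Set.indicator_of_notMem
        simp only [Set.mem_setOf_eq, not_le]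
        linarith [mem_Ioi.mp ht]
      simp [hind]
    rcases (ENNReal.toReal_eq_zero_iff _).1 h0 with h' | h'
    · exact h'
    · exact absurd h' (measure_ne_top _ _)
  -- K2 : quantitative bound on the probability of an early jump
  have K2 : ∀ T : ℝ, ∀ z : Y × I × ℝ, 0 ≤ z.2.2 → z.2.2 ≤ T →
      (Pbar z {w | w.2.2 ≤ T}).toReal ≤ lmax * T := by
    intro T z hz hzT
    have h : (Pbar z {w | w.2.2 ≤ T}).toReal
        = ∫ t in Ioi (0:ℝ), lam (S z.2.1 t z.1) * exp (-(cumInt S lam z.1 z.2.1 t)) *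
          ∫ u, ∑ j, pm z.2.1 j u *
            ({w : Y × I × ℝ | w.2.2 ≤ T}).indicator (fun _ => (1:ℝ)) (u, j, z.2.2 + t)
              ∂(J (S z.2.1 t z.1)) :=
      hPbar z.1 z.2.1 z.2.2 hz {w | w.2.2 ≤ T} (hAmeas T)
    rw [h]
    set r : ℝ := T - z.2.2 with hr
    have hr0 : 0 ≤ r := by rw [hr]; linarith
    have hin : ∀ t : ℝ, (∫ u, ∑ j, pm z.2.1 j u *
        ({w : Y × I × ℝ | w.2.2 ≤ T}).indicator (fun _ => (1:ℝ)) (u, j, z.2.2 + t)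
          ∂(J (S z.2.1 t z.1))) = if z.2.2 + t ≤ T then 1 else 0 := by
      intro t
      by_cases hc : z.2.2 + t ≤ T
      · rw [if_pos hc]
        have hu : ∀ u : Y, ∑ j, pm z.2.1 j u *
            ({w : Y × I × ℝ | w.2.2 ≤ T}).indicator (fun _ => (1:ℝ)) (u, j, z.2.2 + t) = 1 := by
          intro u
          have hj : ∀ j : I,
              ({w : Y × I × ℝ | w.2.2 ≤ T}).indicator (fun _ => (1:ℝ)) (u, j, z.2.2 + t) = 1 :=
            fun j => Set.indicator_of_mem
              (show ((u, j, z.2.2 + t) : Y × I × ℝ) ∈ {w : Y × I × ℝ | w.2.2 ≤ T} from hc) _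
          simp [hj, hpm_sum]
        simp [hu, measure_univ]
      · rw [if_neg hc]
        have hj : ∀ (u : Y) (j : I),
            ({w : Y × I × ℝ | w.2.2 ≤ T}).indicator (fun _ => (1:ℝ)) (u, j, z.2.2 + t) = 0 :=
          fun u j => Set.indicator_of_notMem
            (show ((u, j, z.2.2 + t) : Y × I × ℝ) ∉ {w : Y × I × ℝ | w.2.2 ≤ T} from hc) _
        simp [hj]
    have hEq : EqOn
        (fun t => lam (S z.2.1 t z.1) * exp (-(cumInt S lam z.1 z.2.1 t)) *
          ∫ u, ∑ j, pm z.2.1 j u *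
            ({w : Y × I × ℝ | w.2.2 ≤ T}).indicator (fun _ => (1:ℝ)) (u, j, z.2.2 + t)
              ∂(J (S z.2.1 t z.1)))
        ((Ioc (0:ℝ) r).indicator
          (fun t => lam (S z.2.1 t z.1) * exp (-(cumInt S lam z.1 z.2.1 t)))) (Ioi 0) := by
      intro t ht
      simp only
      rw [hin t]
      by_cases hc : z.2.2 + t ≤ T
      · have htm : t ∈ Ioc (0:ℝ) r := ⟨mem_Ioi.mp ht, by rw [hr]; linarith⟩
        rw [if_pos hc, mul_one, Set.indicator_of_mem htm]
      · rw [if_neg hc, mul_zero]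
        refine (Set.indicator_of_notMem ?_ _).symm
        intro hmem
        apply hc
        have := hmem.2
        rw [hr] at this
        linarith
    have hbd : ∀ t ∈ Ioc (0:ℝ) r,
        ‖lam (S z.2.1 t z.1) * exp (-(cumInt S lam z.1 z.2.1 t))‖ ≤ lmax := by
      intro t ht
      have h1 : (0:ℝ) ≤ lam (S z.2.1 t z.1) := (hlmin.trans_le (hlam_bd _).1).le
      have h2 : lam (S z.2.1 t z.1) ≤ lmax := (hlam_bd _).2
      have h3 : 0 ≤ cumInt S lam z.1 z.2.1 t :=
        intervalIntegral.integral_nonneg ht.1.le (fun u _ => (hlmin.trans_le (hlam_bd _).1).le)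
      have h4 : exp (-(cumInt S lam z.1 z.2.1 t)) ≤ 1 := by
        calc exp (-(cumInt S lam z.1 z.2.1 t)) ≤ exp 0 := by
              apply Real.exp_le_exp.mpr; linarith
          _ = 1 := Real.exp_zero
      rw [Real.norm_eq_abs, abs_of_nonneg (mul_nonneg h1 (Real.exp_pos _).le)]
      calc lam (S z.2.1 t z.1) * exp (-(cumInt S lam z.1 z.2.1 t)) ≤ lmax * 1 :=
            mul_le_mul h2 h4 (Real.exp_pos _).le hlmax.le
        _ = lmax := mul_one _
    calc (∫ t in Ioi (0:ℝ), lam (S z.2.1 t z.1) * exp (-(cumInt S lam z.1 z.2.1 t)) *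
          ∫ u, ∑ j, pm z.2.1 j u *
            ({w : Y × I × ℝ | w.2.2 ≤ T}).indicator (fun _ => (1:ℝ)) (u, j, z.2.2 + t)
              ∂(J (S z.2.1 t z.1)))
        = ∫ t in Ioc (0:ℝ) r, lam (S z.2.1 t z.1) * exp (-(cumInt S lam z.1 z.2.1 t)) := by
          rw [setIntegral_congr_fun measurableSet_Ioi hEq,
            setIntegral_indicator measurableSet_Ioc,
            Set.inter_eq_self_of_subset_right Ioc_subset_Ioi_self]
      _ ≤ lmax * (volume (Ioc (0:ℝ) r)).toReal := by
          refine le_trans (le_abs_self _) ?_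
          rw [← Real.norm_eq_abs]
          exact (norm_setIntegral_le_of_norm_le_const measure_Ioc_lt_top hbd).trans_eq (by rw [measureReal_def])
      _ = lmax * r := by rw [Real.volume_Ioc, sub_zero, ENNReal.toReal_ofReal hr0]
      _ ≤ lmax * T := by apply mul_le_mul_of_nonneg_left _ hlmax.le; rw [hr]; linarith
  -- rewriting the integral of the indicator as a measure
  have hind_eq : ∀ (T : ℝ) (w : Y × I × ℝ),
      (Ioi T).indicator (fun _ => (1:ℝ)) w.2.2
        = ({w : Y × I × ℝ | T < w.2.2}).indicator (fun _ => (1:ℝ)) w := by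
    intro T w
    by_cases h : T < w.2.2 <;>
      simp [Set.indicator_apply, Set.mem_setOf_eq, mem_Ioi, h]
  have hqeq : ∀ (T : ℝ) (z : Y × I × ℝ),
      (∫ w, (Ioi T).indicator (fun _ => (1:ℝ)) w.2.2 ∂(Pbar z))
        = ((Pbar z) {w | T < w.2.2}).toReal := by
    intro T z
    simp_rw [hind_eq T]
    rw [integral_indicator_const (1:ℝ) (hAmeas' T)]
    simp [Measure.real]
  have hq01 : ∀ (T : ℝ) (z : Y × I × ℝ), 0 ≤ ((Pbar z) {w | T < w.2.2}).toReal ∧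
      ((Pbar z) {w | T < w.2.2}).toReal ≤ 1 := by
    intro T z
    refine ⟨ENNReal.toReal_nonneg, ?_⟩
    exact le_trans (ENNReal.toReal_mono ENNReal.one_ne_top prob_le_one) (le_of_eq ENNReal.toReal_one)
  have hind_le : ∀ (s : Set ℝ) (a : ℝ), |s.indicator (fun _ => (1:ℝ)) a| ≤ 1 := by
    intro s a
    by_cases h : a ∈ s
    · rw [Set.indicator_of_mem h]; norm_num
    · rw [Set.indicator_of_notMem h]; norm_num
  -- the integrand of PTf
  set G : ℝ → (Y × I × ℝ) → ℝ := fun T z =>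
    (Icc (0:ℝ) T).indicator (fun _ => (1:ℝ)) z.2.2 * f (S z.2.1 (T - z.2.2) z.1, z.2.1) *
      ∫ w, (Ioi T).indicator (fun _ => (1:ℝ)) w.2.2 ∂(Pbar z) with hG
  have hPT : ∀ T : ℝ, PTf S Pbar f T x
      = ∑' n : ℕ, kernelOpIter Pbar n (G T) (x.1, x.2, 0) := fun T => rfl
  -- the key geometric bound
  have key : ∀ T : ℝ, 0 < T → ∀ n : ℕ, ∀ z : Y × I × ℝ, 0 ≤ z.2.2 →
      |kernelOpIter Pbar n (G T) z| ≤ M * (lmax * T) ^ n * (if z.2.2 ≤ T then 1 else 0) := by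
    intro T hT n
    induction n with
    | zero =>
      intro z hz
      by_cases hc : z.2.2 ≤ T
      · rw [if_pos hc]
        simp only [kernelOpIter, pow_zero, mul_one]
        have h3 : |(∫ w, (Ioi T).indicator (fun _ => (1:ℝ)) w.2.2 ∂(Pbar z))| ≤ 1 := by
          rw [hqeq T z, abs_of_nonneg (hq01 T z).1]
          exact (hq01 T z).2
        calc |G T z| = |(Icc (0:ℝ) T).indicator (fun _ => (1:ℝ)) z.2.2|
              * |f (S z.2.1 (T - z.2.2) z.1, z.2.1)|
              * |(∫ w, (Ioi T).indicator (fun _ => (1:ℝ)) w.2.2 ∂(Pbar z))| := by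
              rw [hG]; rw [abs_mul, abs_mul]
          _ ≤ 1 * M * 1 := by
              apply mul_le_mul _ h3 (abs_nonneg _) (by rw [one_mul]; exact hM0)
              exact mul_le_mul (hind_le _ _) (hM _) (abs_nonneg _) zero_le_one
          _ = M := by ring
      · rw [if_neg hc, mul_zero]
        have hzero : G T z = 0 := by
          rw [hG]
          simp only
          rw [Set.indicator_of_notMem (fun hm => hc hm.2), zero_mul, zero_mul]
        rw [show kernelOpIter Pbar 0 (G T) z = G T z from rfl, hzero, abs_zero]
    | succ n ih =>
      intro z hz
      have h1 : ∀ᵐ w ∂(Pbar z), z.2.2 < w.2.2 := by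
        have h0 := K1 z hz
        rw [measure_eq_zero_iff_ae_notMem] at h0
        filter_upwards [h0] with w hw
        simpa [not_le] using hw
      have hae : ∀ᵐ w ∂(Pbar z), ‖kernelOpIter Pbar n (G T) w‖ ≤
          ({w : Y × I × ℝ | w.2.2 ≤ T}).indicator (fun _ => M * (lmax * T) ^ n) w := by
        filter_upwards [h1] with w hw
        have hw0 : 0 ≤ w.2.2 := (lt_of_le_of_lt hz hw).le
        have hiw := ih w hw0
        rw [Real.norm_eq_abs]
        by_cases hc : w.2.2 ≤ T
        · rw [Set.indicator_of_mem (show w ∈ {w : Y × I × ℝ | w.2.2 ≤ T} from hc)]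
          simpa [if_pos hc] using hiw
        · rw [Set.indicator_of_notMem (show w ∉ {w : Y × I × ℝ | w.2.2 ≤ T} from hc)]
          simpa [if_neg hc] using hiw
      have hstep : |kernelOpIter Pbar (n + 1) (G T) z|
          ≤ M * (lmax * T) ^ n * ((Pbar z) {w | w.2.2 ≤ T}).toReal := by
        have hint : Integrable
            (({w : Y × I × ℝ | w.2.2 ≤ T}).indicator (fun _ => M * (lmax * T) ^ n)) (Pbar z) :=
          (integrable_const _).indicator (hAmeas T)
        rw [← Real.norm_eq_abs]
        calc ‖kernelOpIter Pbar (n + 1) (G T) z‖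
            = ‖∫ w, kernelOpIter Pbar n (G T) w ∂(Pbar z)‖ := rfl
          _ ≤ ∫ w, ({w : Y × I × ℝ | w.2.2 ≤ T}).indicator
                (fun _ => M * (lmax * T) ^ n) w ∂(Pbar z) :=
              norm_integral_le_of_norm_le hint hae
          _ = ((Pbar z) {w | w.2.2 ≤ T}).toReal * (M * (lmax * T) ^ n) := by
              rw [integral_indicator_const _ (hAmeas T)]; simp [Measure.real]
          _ = M * (lmax * T) ^ n * ((Pbar z) {w | w.2.2 ≤ T}).toReal := by ring
      by_cases hc : z.2.2 ≤ T
      · rw [if_pos hc, mul_one]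
        calc |kernelOpIter Pbar (n + 1) (G T) z|
            ≤ M * (lmax * T) ^ n * ((Pbar z) {w | w.2.2 ≤ T}).toReal := hstep
          _ ≤ M * (lmax * T) ^ n * (lmax * T) := by
              apply mul_le_mul_of_nonneg_left (K2 T z hz hc)
              exact mul_nonneg hM0 (pow_nonneg (mul_nonneg hlmax.le hT.le) n)
          _ = M * (lmax * T) ^ (n + 1) := by ring
      · rw [if_neg hc, mul_zero]
        have hzero : (Pbar z) {w | w.2.2 ≤ T} = 0 := by
          apply measure_mono_null _ (K1 z hz)
          intro w hw
          exact le_trans (show w.2.2 ≤ T from hw) (le_of_not_ge hc)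
        calc |kernelOpIter Pbar (n + 1) (G T) z|
            ≤ M * (lmax * T) ^ n * ((Pbar z) {w | w.2.2 ≤ T}).toReal := hstep
          _ = 0 := by rw [hzero]; simp
  -- the tail estimate
  have hmain : ∀ T : ℝ, 0 < T → T < (2 * lmax)⁻¹ →
      |PTf S Pbar f T x - G T (x.1, x.2, 0)| ≤ 2 * M * lmax * T := by
    intro T hT hTδ
    have hc0 : (0:ℝ) ≤ lmax * T := mul_nonneg hlmax.le hT.le
    have hc2 : lmax * T ≤ 1 / 2 := by
      have h1 : lmax * T < lmax * (2 * lmax)⁻¹ := by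
        exact mul_lt_mul_of_pos_left hTδ hlmax
      have h2 : lmax * (2 * lmax)⁻¹ = 1 / 2 := by
        rw [mul_inv, mul_comm (2:ℝ)⁻¹, ← mul_assoc, mul_inv_cancel₀ (ne_of_gt hlmax), one_mul]
        norm_num
      linarith
    have hc1 : lmax * T < 1 := lt_of_le_of_lt hc2 (by norm_num)
    have hterm : ∀ n : ℕ, ‖kernelOpIter Pbar n (G T) (x.1, x.2, 0)‖ ≤ M * (lmax * T) ^ n := by
      intro n
      have hk := key T hT n (x.1, x.2, 0) (le_refl 0)
      rw [Real.norm_eq_abs]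
      simpa [hT.le] using hk
    have hge : Summable (fun n : ℕ => M * (lmax * T) ^ n) :=
      (summable_geometric_of_lt_one hc0 hc1).mul_left M
    have hsum : Summable (fun n : ℕ => kernelOpIter Pbar n (G T) (x.1, x.2, 0)) :=
      Summable.of_norm_bounded hge hterm
    have hge' : Summable (fun n : ℕ => M * (lmax * T) * (lmax * T) ^ n) :=
      (summable_geometric_of_lt_one hc0 hc1).mul_left (M * (lmax * T))
    have hterm' : ∀ n : ℕ, ‖kernelOpIter Pbar (n + 1) (G T) (x.1, x.2, 0)‖
        ≤ M * (lmax * T) * (lmax * T) ^ n := by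
      intro n
      calc ‖kernelOpIter Pbar (n + 1) (G T) (x.1, x.2, 0)‖
          ≤ M * (lmax * T) ^ (n + 1) := hterm (n + 1)
        _ = M * (lmax * T) * (lmax * T) ^ n := by ring
    have hnorms : Summable (fun n : ℕ => ‖kernelOpIter Pbar (n + 1) (G T) (x.1, x.2, 0)‖) :=
      Summable.of_nonneg_of_le (fun n => norm_nonneg _) hterm' hge'
    have heq : PTf S Pbar f T x - G T (x.1, x.2, 0)
        = ∑' n : ℕ, kernelOpIter Pbar (n + 1) (G T) (x.1, x.2, 0) := by
      rw [hPT T, hsum.tsum_eq_zero_add]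
      have h0 : kernelOpIter Pbar 0 (G T) (x.1, x.2, 0) = G T (x.1, x.2, 0) := rfl
      rw [h0]
      ring
    rw [heq]
    have hinv : (1 - lmax * T)⁻¹ ≤ 2 := by
      have h12 : (1:ℝ) / 2 ≤ 1 - lmax * T := by linarith
      have := inv_anti₀ (by norm_num : (0:ℝ) < 1 / 2) h12
      simpa using this
    calc |∑' n : ℕ, kernelOpIter Pbar (n + 1) (G T) (x.1, x.2, 0)|
        ≤ ∑' n : ℕ, ‖kernelOpIter Pbar (n + 1) (G T) (x.1, x.2, 0)‖ := by
          rw [← Real.norm_eq_abs]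
          exact norm_tsum_le_tsum_norm hnorms
      _ ≤ ∑' n : ℕ, M * (lmax * T) * (lmax * T) ^ n := Summable.tsum_le_tsum hterm' hnorms hge'
      _ = M * (lmax * T) * (1 - lmax * T)⁻¹ := by
          rw [tsum_mul_left, tsum_geometric_of_lt_one hc0 hc1]
      _ ≤ M * (lmax * T) * 2 := by
          apply mul_le_mul_of_nonneg_left hinv (mul_nonneg hM0 hc0)
      _ = 2 * M * lmax * T := by ring
  -- convergence of the first term
  have hS0 : Tendsto (fun T : ℝ => S x.2 T x.1) (𝓝[>] (0:ℝ)) (𝓝 x.1) := by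
    have h1 : ContinuousWithinAt (fun p : ℝ × Y => S x.2 p.1 p.2)
        (Ici (0:ℝ) ×ˢ (univ : Set Y)) (0, x.1) :=
      hS_cont x.2 (0, x.1) ⟨Set.mem_Ici.mpr le_rfl, mem_univ _⟩
    have h2 : Tendsto (fun T : ℝ => ((T, x.1) : ℝ × Y)) (𝓝[>] (0:ℝ))
        (𝓝[Ici (0:ℝ) ×ˢ (univ : Set Y)] (0, x.1)) := by
      apply tendsto_nhdsWithin_of_tendsto_nhds_of_eventually_within
      · exact ((continuous_id.prodMk continuous_const).tendsto 0).mono_left nhdsWithin_le_nhds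
      · filter_upwards [self_mem_nhdsWithin] with T hT
        exact ⟨Set.mem_Ici.mpr (le_of_lt (mem_Ioi.mp hT)), mem_univ _⟩
    have h3 := h1.tendsto.comp h2
    rw [hS_zero] at h3
    exact h3
  have h1f : Tendsto (fun T : ℝ => f (S x.2 T x.1, x.2)) (𝓝[>] (0:ℝ)) (𝓝 (f x)) := by
    have := (hf_cont.tendsto (x.1, x.2)).comp (hS0.prodMk_nhds tendsto_const_nhds)
    simpa [Function.comp_def] using this
  have hcompl : ∀ T : ℝ, ((Pbar (x.1, x.2, 0)) {w | T < w.2.2}).toReal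
      = 1 - ((Pbar (x.1, x.2, 0)) {w | w.2.2 ≤ T}).toReal := by
    intro T
    have hs : {w : Y × I × ℝ | T < w.2.2} = {w : Y × I × ℝ | w.2.2 ≤ T}ᶜ := by
      ext w; simp [not_le]
    rw [hs, measure_compl (hAmeas T) (measure_ne_top _ _), measure_univ,
      ENNReal.toReal_sub_of_le prob_le_one ENNReal.one_ne_top, ENNReal.toReal_one]
  have he0 : Tendsto (fun T : ℝ => ((Pbar (x.1, x.2, 0)) {w | w.2.2 ≤ T}).toReal)
      (𝓝[>] (0:ℝ)) (𝓝 0) := by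
    apply squeeze_zero' (Eventually.of_forall fun T => ENNReal.toReal_nonneg)
    · filter_upwards [self_mem_nhdsWithin] with T hT
      exact K2 T (x.1, x.2, 0) (le_refl 0) (le_of_lt hT)
    · have hcont : Continuous (fun T : ℝ => lmax * T) := continuous_const.mul continuous_id
      exact (show Tendsto (fun T : ℝ => lmax * T) (𝓝[>] (0:ℝ)) (𝓝 0) from
        (hcont.tendsto' 0 0 (by ring)).mono_left nhdsWithin_le_nhds)
  have hq1 : Tendsto (fun T : ℝ => ((Pbar (x.1, x.2, 0)) {w | T < w.2.2}).toReal)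
      (𝓝[>] (0:ℝ)) (𝓝 1) := by
    have h5 : Tendsto (fun T : ℝ => 1 - ((Pbar (x.1, x.2, 0)) {w | w.2.2 ≤ T}).toReal)
        (𝓝[>] (0:ℝ)) (𝓝 (1 - 0)) := tendsto_const_nhds.sub he0
    rw [sub_zero] at h5
    exact h5.congr (fun T => (hcompl T).symm)
  have hA : Tendsto (fun T : ℝ => G T (x.1, x.2, 0)) (𝓝[>] (0:ℝ)) (𝓝 (f x)) := by
    have hmul := h1f.mul hq1
    rw [mul_one] at hmul
    apply hmul.congr'
    filter_upwards [self_mem_nhdsWithin] with T hT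
    have hGT : G T (x.1, x.2, 0) = (Icc (0:ℝ) T).indicator (fun _ => (1:ℝ)) 0
        * f (S x.2 (T - 0) x.1, x.2)
        * ∫ w, (Ioi T).indicator (fun _ => (1:ℝ)) w.2.2 ∂(Pbar (x.1, x.2, 0)) := rfl
    rw [hGT, sub_zero,
      Set.indicator_of_mem (show (0:ℝ) ∈ Icc (0:ℝ) T from ⟨le_refl _, (mem_Ioi.mp hT).le⟩),
      one_mul, hqeq T (x.1, x.2, 0)]
  have hR : Tendsto (fun T : ℝ => PTf S Pbar f T x - G T (x.1, x.2, 0)) (𝓝[>] (0:ℝ)) (𝓝 0) := by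
    refine squeeze_zero_norm' (a := fun T : ℝ => 2 * M * lmax * T) ?_ ?_
    · have hδ : (0:ℝ) < (2 * lmax)⁻¹ := inv_pos.mpr (by linarith)
      filter_upwards [Ioo_mem_nhdsGT_of_mem (⟨le_refl (0:ℝ), hδ⟩ : (0:ℝ) ∈ Ico (0:ℝ) (2 * lmax)⁻¹)]
        with T hT
      rw [Real.norm_eq_abs]
      exact hmain T hT.1 hT.2
    · have hcont : Continuous (fun T : ℝ => 2 * M * lmax * T) :=
        continuous_const.mul continuous_id
      exact (hcont.tendsto' 0 0 (by ring)).mono_left nhdsWithin_le_nhds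
  have hfinal := hA.add hR
  rw [add_zero] at hfinal
  exact hfinal.congr (fun T => by ring)
end
end

section
/- For every bounded continuous f : X → ℝ: the function Gf is bounded and continuous, the function λ̂·(Gf − f) is bounded and continuous, the difference quotients (Q_T(Gf) − Gf)/T converge pointwise on X to λ̂·(Gf − f) as T → 0+, and there exists δ > 0 with sup_{0<T≤δ} ‖(Q_T(Gf) − Gf)/T‖_∞ < ∞. In particular Gf lies in the domain of the weak generator A_Q of {Q_t}, with A_Q(Gf) = λ̂·(Gf − f), i.e. Gf − A_Q(Gf)/λ̂ = f. -/
open MeasureTheory ProbabilityTheory Real Set Filter Topology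

noncomputable section

lemma continuous_of_slices {Y I : Type*} [TopologicalSpace Y] [TopologicalSpace I]
    [DiscreteTopology I] {g : Y × I → ℝ} (h : ∀ i, Continuous fun y => g (y, i)) :
    Continuous g := by
  rw [continuous_iff_continuousAt]
  rintro ⟨y, i⟩
  have hmem : {p : Y × I | p.2 = i} ∈ 𝓝 ((y, i) : Y × I) := by
    have : IsOpen {p : Y × I | p.2 = i} :=
      (isOpen_discrete ({i} : Set I)).preimage continuous_snd
    exact this.mem_nhds rfl
  have h2 : ContinuousAt (fun p : Y × I => g (p.1, i)) (y, i) :=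
    ((h i).comp continuous_fst).continuousAt
  refine h2.congr ?_
  filter_upwards [hmem] with p hp
  exact congrArg g (Prod.ext rfl hp.symm)

lemma tendsto_avg_integral {h : ℝ → ℝ} (hc : Continuous h) :
    Tendsto (fun T => (∫ t in (0:ℝ)..T, h t) / T) (𝓝[>] 0) (𝓝 (h 0)) := by
  have H : HasDerivAt (fun u => ∫ t in (0:ℝ)..u, h t) (h 0) 0 :=
    (hc.integral_hasStrictDerivAt 0 0).hasDerivAt
  have h2 := hasDerivAt_iff_tendsto_slope.1 H
  have h3 : Tendsto (slope (fun u => ∫ t in (0:ℝ)..u, h t) 0) (𝓝[>] 0) (𝓝 (h 0)) :=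
    h2.mono_left (nhdsWithin_mono 0 (fun x hx => ne_of_gt hx))
  refine h3.congr' ?_
  filter_upwards [self_mem_nhdsWithin] with T (hT : 0 < T)
  rw [slope_def_field]
  simp

lemma tendsto_exp_slope : Tendsto (fun u : ℝ => (exp u - 1) / u) (𝓝[≠] 0) (𝓝 1) := by
  have H := hasDerivAt_iff_tendsto_slope.1 (Real.hasDerivAt_exp 0)
  simp only [Real.exp_zero] at H
  refine H.congr ?_
  intro u
  rw [slope_def_field]
  simp
theorem G_in_domain_AQ
    {Y : Type*} [MetricSpace Y] [TopologicalSpace.SeparableSpace Y] [CompleteSpace Y]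
    [MeasurableSpace Y] [BorelSpace Y]
    {I : Type*} [Fintype I] [Nonempty I] [TopologicalSpace I] [DiscreteTopology I]
    [MeasurableSpace I] [MeasurableSingletonClass I]
    (S : I → ℝ → Y → Y)
    (hS_cont : ∀ i, ContinuousOn (fun p : ℝ × Y => S i p.1 p.2) (Ici (0:ℝ) ×ˢ (univ : Set Y)))
    (hS_zero : ∀ i y, S i 0 y = y)
    (hS_add : ∀ i, ∀ s ≥ (0:ℝ), ∀ t ≥ (0:ℝ), ∀ y, S i (s + t) y = S i s (S i t y))
    (lam : Y → ℝ) (hlam_cont : Continuous lam) (lmin lmax : ℝ) (hlmin : 0 < lmin)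
    (hlam_bd : ∀ y, lmin ≤ lam y ∧ lam y ≤ lmax)
    (f : Y × I → ℝ) (hf_cont : Continuous f) (hf_bdd : ∃ M, ∀ x, |f x| ≤ M) :
    Continuous (Gop S lam f) ∧ (∃ M, ∀ x : Y × I, |Gop S lam f x| ≤ M) ∧
    Continuous (fun x : Y × I => lam x.1 * (Gop S lam f x - f x)) ∧
    (∃ M, ∀ x : Y × I, |lam x.1 * (Gop S lam f x - f x)| ≤ M) ∧
    (∀ x : Y × I,
      Tendsto (fun T => (Gop S lam f (S x.2 T x.1, x.2) - Gop S lam f x) / T)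
        (𝓝[>] (0:ℝ)) (𝓝 (lam x.1 * (Gop S lam f x - f x)))) ∧
    ∃ δ > (0:ℝ), ∃ M, ∀ T ∈ Ioc (0:ℝ) δ, ∀ x : Y × I,
      |(Gop S lam f (S x.2 T x.1, x.2) - Gop S lam f x) / T| ≤ M := by
  classical
  obtain ⟨M0, hM0⟩ := hf_bdd
  rcases isEmpty_or_nonempty Y with hY | hY
  · have hE : IsEmpty (Y × I) := ⟨fun x => hY.false x.1⟩
    exact ⟨by rw [continuous_iff_continuousAt]; exact fun x => (hE.false x).elim,
      ⟨0, fun x => (hE.false x).elim⟩,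
      by rw [continuous_iff_continuousAt]; exact fun x => (hE.false x).elim,
      ⟨0, fun x => (hE.false x).elim⟩,
      fun x => (hE.false x).elim,
      1, one_pos, 0, fun T _ x => (hE.false x).elim⟩
  obtain ⟨y₀⟩ := hY
  set M : ℝ := max M0 0 with hMdef
  have hMnn : 0 ≤ M := le_max_right _ _
  have hfM : ∀ x, |f x| ≤ M := fun x => (hM0 x).trans (le_max_left _ _)
  have hlmax0 : 0 < lmax := lt_of_lt_of_le hlmin ((hlam_bd y₀).1.trans (hlam_bd y₀).2)
  have hlam_abs : ∀ y, |lam y| ≤ lmax := fun y =>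
    abs_le.2 ⟨by linarith [(hlam_bd y).1], (hlam_bd y).2⟩
  -- continuity of the extended flow
  have hphi : ∀ i, Continuous fun p : ℝ × Y => S i (max p.1 0) p.2 := by
    intro i
    have hmap : Continuous fun p : ℝ × Y => ((max p.1 0 : ℝ), p.2) :=
      (continuous_fst.max continuous_const).prodMk continuous_snd
    exact (hS_cont i).comp_continuous hmap fun p => ⟨Set.mem_Ici.2 (le_max_right _ _), trivial⟩
  have hphi_t : ∀ i y, Continuous fun t : ℝ => S i (max t 0) y :=
    fun i y => (hphi i).comp (continuous_id.prodMk continuous_const)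
  have hphi_y : ∀ i t, Continuous fun y : Y => S i (max t 0) y :=
    fun i t => (hphi i).comp (continuous_const.prodMk continuous_id)
  have hg_cont : ∀ i y, Continuous fun h : ℝ => lam (S i (max h 0) y) :=
    fun i y => hlam_cont.comp (hphi_t i y)
  -- the cumulative intensity
  set c : I → Y → ℝ → ℝ := fun i y t => ∫ h in (0:ℝ)..t, lam (S i (max h 0) y) with hcdef
  have hc_cont_t : ∀ i y, Continuous (c i y) := fun i y =>
    intervalIntegral.continuous_primitive (fun a b => (hg_cont i y).intervalIntegrable a b) 0
  have hc0 : ∀ i y, c i y 0 = 0 := by intro i y; simp [hcdef]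
  have hc_cumInt : ∀ i y t, 0 ≤ t → cumInt S lam y i t = c i y t := by
    intro i y t ht
    apply intervalIntegral.integral_congr
    intro h hh
    rw [uIcc_of_le ht] at hh
    show lam (S i h y) = lam (S i (max h 0) y)
    rw [max_eq_left hh.1]
  have hc_lb : ∀ i y t, 0 ≤ t → lmin * t ≤ c i y t := by
    intro i y t ht
    have h1 : (∫ _h in (0:ℝ)..t, lmin) ≤ c i y t := by
      apply intervalIntegral.integral_mono_on ht intervalIntegrable_const
        ((hg_cont i y).intervalIntegrable _ _)
      intro u _
      exact (hlam_bd _).1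
    simpa [mul_comm] using h1
  have hc_ub : ∀ i y t, 0 ≤ t → c i y t ≤ lmax * t := by
    intro i y t ht
    have h1 : c i y t ≤ ∫ _h in (0:ℝ)..t, lmax := by
      apply intervalIntegral.integral_mono_on ht ((hg_cont i y).intervalIntegrable _ _)
        intervalIntegrable_const
      intro u _
      exact (hlam_bd _).2
    simpa [mul_comm] using h1
  have hc_nonneg : ∀ i y t, 0 ≤ t → 0 ≤ c i y t :=
    fun i y t ht => le_trans (by positivity) (hc_lb i y t ht)
  -- the integrand
  set H : I → Y → ℝ → ℝ := fun i y t =>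
    lam (S i (max t 0) y) * exp (-(c i y t)) * f (S i (max t 0) y, i) with hHdef
  have hH_cont_t : ∀ i y, Continuous (H i y) := fun i y =>
    ((hg_cont i y).mul (Real.continuous_exp.comp (hc_cont_t i y).neg)).mul
      (hf_cont.comp ((hphi_t i y).prodMk continuous_const))
  have hc_cont_y : ∀ i t, Continuous fun y => c i y t := by
    intro i t
    rw [continuous_iff_continuousAt]
    intro y₁
    apply intervalIntegral.tendsto_integral_filter_of_dominated_convergence (fun _ => lmax)
    · exact Eventually.of_forall fun y => (hg_cont i y).aestronglyMeasurable.restrict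
    · exact Eventually.of_forall fun y => ae_of_all _ fun h _ => by
        rw [Real.norm_eq_abs]; exact hlam_abs _
    · exact intervalIntegrable_const
    · exact ae_of_all _ fun h _ => ((hlam_cont.comp (hphi_y i h)).tendsto y₁)
  have hH_cont_y : ∀ i t, Continuous fun y => H i y t := fun i t =>
    ((hlam_cont.comp (hphi_y i t)).mul (Real.continuous_exp.comp (hc_cont_y i t).neg)).mul
      (hf_cont.comp ((hphi_y i t).prodMk continuous_const))
  -- the dominating bound
  set bnd : ℝ → ℝ := fun t => lmax * M * exp (-lmin * t) with hbnddef
  have hbnd_int : IntegrableOn bnd (Ioi (0:ℝ)) := (exp_neg_integrableOn_Ioi 0 hlmin).const_mul _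
  have hbnd_nonneg : ∀ t, 0 ≤ bnd t :=
    fun t => mul_nonneg (mul_nonneg hlmax0.le hMnn) (exp_pos _).le
  have hH_le : ∀ i y t, 0 ≤ t → |H i y t| ≤ bnd t := by
    intro i y t ht
    simp only [hHdef, hbnddef]
    rw [abs_mul, abs_mul]
    have h1 : |lam (S i (max t 0) y)| ≤ lmax := hlam_abs _
    have h2 : |exp (-(c i y t))| ≤ exp (-lmin * t) := by
      rw [abs_of_pos (exp_pos _)]
      apply exp_le_exp.2
      have := hc_lb i y t ht
      linarith
    have h3 : |f (S i (max t 0) y, i)| ≤ M := hfM _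
    calc |lam (S i (max t 0) y)| * |exp (-(c i y t))| * |f (S i (max t 0) y, i)|
        ≤ lmax * exp (-lmin * t) * M :=
          mul_le_mul (mul_le_mul h1 h2 (abs_nonneg _) hlmax0.le) h3 (abs_nonneg _) (by positivity)
      _ = lmax * M * exp (-lmin * t) := by ring
  have hH_int : ∀ i y, IntegrableOn (H i y) (Ioi (0:ℝ)) := by
    intro i y
    apply Integrable.mono' hbnd_int ((hH_cont_t i y).aestronglyMeasurable.restrict)
    rw [ae_restrict_iff' measurableSet_Ioi]
    exact ae_of_all _ fun t ht => by rw [Real.norm_eq_abs]; exact hH_le i y t ht.le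
  have hG_eq : ∀ i y, Gop S lam f (y, i) = ∫ t in Ioi (0:ℝ), H i y t := by
    intro i y
    apply setIntegral_congr_fun measurableSet_Ioi
    intro t ht
    have ht' : (0:ℝ) ≤ t := le_of_lt ht
    simp only [hHdef]
    rw [max_eq_left ht', hc_cumInt i y t ht']
  set C : ℝ := ∫ t in Ioi (0:ℝ), bnd t with hCdef
  have hC_nonneg : 0 ≤ C :=
    setIntegral_nonneg measurableSet_Ioi fun t _ => hbnd_nonneg t
  have htail_abs : ∀ i y T, 0 ≤ T → |∫ t in Ioi T, H i y t| ≤ C := by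
    intro i y T hT
    have h1 : ‖∫ t in Ioi T, H i y t‖ ≤ ∫ t in Ioi T, bnd t := by
      apply norm_integral_le_of_norm_le (hbnd_int.mono_set (Ioi_subset_Ioi hT))
      rw [ae_restrict_iff' measurableSet_Ioi]
      exact ae_of_all _ fun t ht =>
        by rw [Real.norm_eq_abs]; exact hH_le i y t (hT.trans ht.le)
    have h2 : (∫ t in Ioi T, bnd t) ≤ C :=
      setIntegral_mono_set hbnd_int (ae_of_all _ hbnd_nonneg)
        ((Ioi_subset_Ioi hT).eventuallyLE)
    rw [Real.norm_eq_abs] at h1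
    linarith
  have hG_bdd : ∀ x : Y × I, |Gop S lam f x| ≤ C := by
    rintro ⟨y, i⟩
    rw [hG_eq]
    exact htail_abs i y 0 le_rfl
  have hG_cont : Continuous (Gop S lam f) := by
    apply continuous_of_slices
    intro i
    have heq : (fun y => Gop S lam f (y, i)) = fun y => ∫ t in Ioi (0:ℝ), H i y t :=
      funext fun y => hG_eq i y
    rw [heq, continuous_iff_continuousAt]
    intro y₁
    apply continuousAt_of_dominated
    · exact Eventually.of_forall fun y => (hH_cont_t i y).aestronglyMeasurable.restrict
    · exact Eventually.of_forall fun y => (ae_restrict_iff' measurableSet_Ioi).2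
        (ae_of_all _ fun t ht => by rw [Real.norm_eq_abs]; exact hH_le i y t ht.le)
    · exact hbnd_int
    · exact ae_of_all _ fun t => (hH_cont_y i t).continuousAt
  -- translation identities
  have hc_trans : ∀ i y T t, 0 ≤ T → 0 ≤ t → c i (S i T y) t = c i y (t + T) - c i y T := by
    intro i y T t hT ht
    have hint : ∀ a b : ℝ, IntervalIntegrable (fun h => lam (S i (max h 0) y)) volume a b :=
      fun a b => (hg_cont i y).intervalIntegrable a b
    have hadd : (∫ h in (0:ℝ)..T, lam (S i (max h 0) y))
          + (∫ h in T..(t+T), lam (S i (max h 0) y))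
        = ∫ h in (0:ℝ)..(t+T), lam (S i (max h 0) y) :=
      intervalIntegral.integral_add_adjacent_intervals (hint 0 T) (hint T (t+T))
    have hcomp : (∫ u in (0:ℝ)..t, lam (S i (max (u + T) 0) y))
        = ∫ h in T..(t+T), lam (S i (max h 0) y) := by
      have h := intervalIntegral.integral_comp_add_right
        (a := (0:ℝ)) (b := t) (fun h => lam (S i (max h 0) y)) T
      simpa using h
    have hcongr : c i (S i T y) t = ∫ u in (0:ℝ)..t, lam (S i (max (u+T) 0) y) := by
      simp only [hcdef]
      apply intervalIntegral.integral_congr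
      intro u hu
      rw [uIcc_of_le ht] at hu
      show lam (S i (max u 0) (S i T y)) = lam (S i (max (u + T) 0) y)
      rw [max_eq_left hu.1, max_eq_left (by linarith [hu.1] : (0:ℝ) ≤ u + T),
        ← hS_add i u hu.1 T hT y]
    simp only [hcdef] at hadd ⊢
    simp only [hcdef] at hcongr hcomp
    rw [hcongr, hcomp]
    linarith
  have hshift : ∀ i y T, (∫ s in Ioi (0:ℝ), H i y (s + T)) = ∫ t in Ioi T, H i y t := by
    intro i y T
    have hemb : MeasurableEmbedding (fun s : ℝ => s + T) := measurableEmbedding_addRight T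
    have hmp : MeasurePreserving (fun s : ℝ => s + T) volume volume :=
      measurePreserving_add_right volume T
    have hpre : (fun s : ℝ => s + T) ⁻¹' (Ioi T) = Ioi (0:ℝ) := by
      ext s
      simp [lt_add_iff_pos_left]
    rw [← hpre, hmp.setIntegral_preimage_emb hemb]
  have hsplit : ∀ i y T, 0 ≤ T →
      (∫ t in Ioi (0:ℝ), H i y t) = (∫ t in (0:ℝ)..T, H i y t) + ∫ t in Ioi T, H i y t := by
    intro i y T hT
    rw [intervalIntegral.integral_of_le hT]
    have hdisj : Disjoint (Ioc (0:ℝ) T) (Ioi T) := by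
      rw [Set.disjoint_left]
      rintro a ⟨_, h1⟩ h2
      exact absurd h1 (not_le.2 h2)
    rw [← setIntegral_union hdisj measurableSet_Ioi
      ((hH_int i y).mono_set Ioc_subset_Ioi_self)
      ((hH_int i y).mono_set (Ioi_subset_Ioi hT)), Ioc_union_Ioi_eq_Ioi hT]
  have hGS : ∀ i y T, 0 ≤ T →
      Gop S lam f (S i T y, i) = exp (c i y T) * ∫ t in Ioi T, H i y t := by
    intro i y T hT
    rw [hG_eq]
    have h1 : EqOn (H i (S i T y)) (fun s => exp (c i y T) * H i y (s + T)) (Ioi (0:ℝ)) := by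
      intro s hs
      have hs' : (0:ℝ) ≤ s := le_of_lt hs
      simp only [hHdef]
      rw [hc_trans i y T s hT hs', max_eq_left hs',
        max_eq_left (by linarith : (0:ℝ) ≤ s + T), ← hS_add i s hs' T hT y]
      rw [neg_sub, Real.exp_sub, Real.exp_neg]
      ring
    rw [setIntegral_congr_fun measurableSet_Ioi h1, integral_const_mul, hshift i y T]
  have hquot : ∀ i y T, 0 < T →
      (Gop S lam f (S i T y, i) - Gop S lam f (y, i)) / T
        = ((exp (c i y T) - 1) * (∫ t in Ioi T, H i y t) - ∫ t in (0:ℝ)..T, H i y t) / T := by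
    intro i y T hT
    rw [hGS i y T hT.le, hG_eq, hsplit i y T hT.le]
    ring_nf
  -- the limits
  have hR_tendsto : ∀ i y, Tendsto (fun T => ∫ t in Ioi T, H i y t) (𝓝[>] 0)
      (𝓝 (∫ t in Ioi (0:ℝ), H i y t)) := by
    intro i y
    have hcont : Continuous fun T => ∫ t in (0:ℝ)..T, H i y t :=
      intervalIntegral.continuous_primitive (fun a b => (hH_cont_t i y).intervalIntegrable a b) 0
    have h1 : Tendsto (fun T => ∫ t in (0:ℝ)..T, H i y t) (𝓝[>] 0) (𝓝 0) := by
      have h := (hcont.tendsto 0).mono_left (nhdsWithin_le_nhds (s := Ioi (0:ℝ)))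
      simpa using h
    have h3 := tendsto_const_nhds.sub h1 (f := fun _ : ℝ => ∫ t in Ioi (0:ℝ), H i y t)
    rw [sub_zero] at h3
    refine h3.congr' ?_
    filter_upwards [self_mem_nhdsWithin] with T hT
    rw [hsplit i y T (le_of_lt hT)]
    ring
  have hslope_c : ∀ i y, Tendsto (fun T => c i y T / T) (𝓝[>] 0) (𝓝 (lam y)) := by
    intro i y
    have h := tendsto_avg_integral (hg_cont i y)
    simp only [max_self, hS_zero i y] at h
    exact h
  have hexp_c : ∀ i y, Tendsto (fun T => (exp (c i y T) - 1) / T) (𝓝[>] 0) (𝓝 (lam y)) := by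
    intro i y
    have hc_to0 : Tendsto (fun T => c i y T) (𝓝[>] 0) (𝓝[≠] 0) := by
      rw [tendsto_nhdsWithin_iff]
      constructor
      · have h := (hc_cont_t i y).tendsto 0
        rw [hc0 i y] at h
        exact h.mono_left nhdsWithin_le_nhds
      · filter_upwards [self_mem_nhdsWithin] with T hT
        have hpos : 0 < c i y T := lt_of_lt_of_le (mul_pos hlmin hT) (hc_lb i y T hT.le)
        exact Set.mem_compl_singleton_iff.2 (ne_of_gt hpos)
    have h1 := tendsto_exp_slope.comp hc_to0
    have h2 := h1.mul (hslope_c i y)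
    rw [one_mul] at h2
    refine Tendsto.congr' ?_ h2
    filter_upwards [self_mem_nhdsWithin] with T hT
    have hcne : c i y T ≠ 0 :=
      ne_of_gt (lt_of_lt_of_le (mul_pos hlmin hT) (hc_lb i y T hT.le))
    show (exp (c i y T) - 1) / c i y T * (c i y T / T) = (exp (c i y T) - 1) / T
    field_simp
  have havg : ∀ i y, Tendsto (fun T => (∫ t in (0:ℝ)..T, H i y t) / T) (𝓝[>] 0)
      (𝓝 (lam y * f (y, i))) := by
    intro i y
    have h := tendsto_avg_integral (hH_cont_t i y)
    have hH0 : H i y 0 = lam y * f (y, i) := by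
      simp [hHdef, hS_zero i y, hc0 i y]
    rwa [hH0] at h
  -- assemble
  refine ⟨hG_cont, ⟨C, hG_bdd⟩,
    (hlam_cont.comp continuous_fst).mul (hG_cont.sub hf_cont),
    ⟨lmax * (C + M), ?_⟩, ?_, 1, one_pos, lmax * exp lmax * C + lmax * M, ?_⟩
  · rintro x
    rw [abs_mul]
    have h1 : |Gop S lam f x - f x| ≤ C + M :=
      (abs_sub _ _).trans (add_le_add (hG_bdd x) (hfM x))
    exact mul_le_mul (hlam_abs _) h1 (abs_nonneg _) hlmax0.le
  · rintro ⟨y, i⟩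
    have main := ((hexp_c i y).mul (hR_tendsto i y)).sub (havg i y)
    have heqlim : lam y * (∫ t in Ioi (0:ℝ), H i y t) - lam y * f (y, i)
        = lam y * (Gop S lam f (y, i) - f (y, i)) := by rw [hG_eq]; ring
    rw [heqlim] at main
    refine Tendsto.congr' ?_ main
    filter_upwards [self_mem_nhdsWithin] with T hT
    rw [hquot i y T hT]
    ring
  · rintro T ⟨hT0, hT1⟩ ⟨y, i⟩
    show |(Gop S lam f (S i T y, i) - Gop S lam f (y, i)) / T| ≤ _
    rw [hquot i y T hT0, abs_div, abs_of_pos hT0, div_le_iff₀ hT0]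
    have hcu : c i y T ≤ lmax * T := hc_ub i y T hT0.le
    have hcl : 0 ≤ c i y T := hc_nonneg i y T hT0.le
    have he : |exp (c i y T) - 1| ≤ lmax * exp lmax * T := by
      rw [abs_of_nonneg (by linarith [Real.one_le_exp hcl] : (0:ℝ) ≤ exp (c i y T) - 1)]
      have step1 : exp (c i y T) - 1 ≤ exp (lmax * T) - 1 := by
        have := Real.exp_le_exp.2 hcu
        linarith
      have step2 : exp (lmax * T) - 1 ≤ (lmax * T) * exp (lmax * T) := by
        have hu := Real.add_one_le_exp (-(lmax * T))
        have hprod : exp (-(lmax * T)) * exp (lmax * T) = 1 := by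
          rw [← Real.exp_add]; simp
        nlinarith [Real.exp_pos (lmax * T)]
      have step3 : (lmax * T) * exp (lmax * T) ≤ (lmax * T) * exp lmax := by
        have h1 : lmax * T ≤ lmax := by nlinarith
        have h2 : 0 ≤ lmax * T := by positivity
        exact mul_le_mul_of_nonneg_left (Real.exp_le_exp.2 h1) h2
      nlinarith
    have h1 : |(exp (c i y T) - 1) * ∫ t in Ioi T, H i y t| ≤ (lmax * exp lmax * T) * C := by
      rw [abs_mul]
      exact mul_le_mul he (htail_abs i y T hT0.le) (abs_nonneg _) (by positivity)
    have h2 : |∫ t in (0:ℝ)..T, H i y t| ≤ lmax * M * T := by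
      have hb : ∀ t ∈ Set.uIoc (0:ℝ) T, ‖H i y t‖ ≤ lmax * M := by
        intro t ht
        rw [Set.uIoc_of_le hT0.le] at ht
        rw [Real.norm_eq_abs]
        refine (hH_le i y t ht.1.le).trans ?_
        simp only [hbnddef]
        have : exp (-lmin * t) ≤ 1 := by
          rw [Real.exp_le_one_iff]
          nlinarith [ht.1]
        nlinarith [mul_nonneg hlmax0.le hMnn]
      have := intervalIntegral.norm_integral_le_of_norm_le_const hb
      rw [Real.norm_eq_abs] at this
      refine this.trans ?_
      rw [abs_of_pos (by linarith : (0:ℝ) < T - 0)]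
      ring_nf
      exact le_rfl
    calc |(exp (c i y T) - 1) * (∫ t in Ioi T, H i y t) - ∫ t in (0:ℝ)..T, H i y t|
        ≤ |(exp (c i y T) - 1) * ∫ t in Ioi T, H i y t| + |∫ t in (0:ℝ)..T, H i y t| :=
          abs_sub _ _
      _ ≤ (lmax * exp lmax * T) * C + lmax * M * T := add_le_add h1 h2
      _ = (lmax * exp lmax * C + lmax * M) * T := by ring
end
end

section
/- Let f : X → ℝ and g : X → ℝ be bounded continuous functions such that (Q_t f − f)/t converges pointwise to g as t → 0+ and sup_{0<t≤δ} ‖(Q_t f − f)/t‖_∞ < ∞ for some δ > 0 (i.e. f ∈ D(A_Q) with A_Q f = g). Then for every x ∈ X, Gf(x) − G(g/λ̂)(x) = f(x). -/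
open MeasureTheory ProbabilityTheory Real Set Filter Topology

noncomputable section

theorem G_resolvent_identity
    {Y : Type*} [MetricSpace Y] [TopologicalSpace.SeparableSpace Y] [CompleteSpace Y]
    [MeasurableSpace Y] [BorelSpace Y]
    {I : Type*} [Fintype I] [Nonempty I] [TopologicalSpace I] [DiscreteTopology I]
    [MeasurableSpace I] [MeasurableSingletonClass I]
    (S : I → ℝ → Y → Y)
    (hS_cont : ∀ i, ContinuousOn (fun p : ℝ × Y => S i p.1 p.2) (Ici (0:ℝ) ×ˢ (univ : Set Y)))
    (hS_zero : ∀ i y, S i 0 y = y)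
    (hS_add : ∀ i, ∀ s ≥ (0:ℝ), ∀ t ≥ (0:ℝ), ∀ y, S i (s + t) y = S i s (S i t y))
    (lam : Y → ℝ) (hlam_cont : Continuous lam) (lmin lmax : ℝ) (hlmin : 0 < lmin)
    (hlam_bd : ∀ y, lmin ≤ lam y ∧ lam y ≤ lmax)
    (f g : Y × I → ℝ) (hf_cont : Continuous f) (hf_bdd : ∃ M, ∀ x, |f x| ≤ M)
    (hg_cont : Continuous g) (hg_bdd : ∃ M, ∀ x, |g x| ≤ M)
    (hlim : ∀ x : Y × I,
      Tendsto (fun t => (f (S x.2 t x.1, x.2) - f x) / t) (𝓝[>] (0:ℝ)) (𝓝 (g x)))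
    (hquot : ∃ δ > (0:ℝ), ∃ M, ∀ t ∈ Ioc (0:ℝ) δ, ∀ x : Y × I,
      |(f (S x.2 t x.1, x.2) - f x) / t| ≤ M) :
    ∀ x : Y × I, Gop S lam f x - Gop S lam (fun z => g z / lam z.1) x = f x := by
  rintro ⟨y, i⟩
  obtain ⟨Mf, hMf⟩ := hf_bdd
  obtain ⟨Mg, hMg⟩ := hg_bdd
  -- the "regularized" flow, continuous on all of ℝ
  set φ : ℝ → Y := fun t => S i (max t 0) y with hφdef
  have hφc : Continuous φ := by
    have : Continuous fun t : ℝ => ((max t 0 : ℝ), y) := by fun_prop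
    exact (hS_cont i).comp_continuous this fun t => ⟨show (0:ℝ) ≤ max t 0 from le_max_right _ _, mem_univ _⟩
  have hφ_eq : ∀ t ≥ (0:ℝ), φ t = S i t y := fun t ht => by
    simp [hφdef, max_eq_left ht]
  set lamφ : ℝ → ℝ := fun t => lam (φ t) with hlamφdef
  have hlamφc : Continuous lamφ := hlam_cont.comp hφc
  set L : ℝ → ℝ := fun t => ∫ h in (0:ℝ)..t, lamφ h with hLdef
  have hL_deriv : ∀ t, HasDerivAt L (lamφ t) t := fun t =>
    intervalIntegral.integral_hasDerivAt_right (hlamφc.intervalIntegrable _ _)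
      (hlamφc.stronglyMeasurableAtFilter _ _) hlamφc.continuousAt
  have hLc : Continuous L := continuous_iff_continuousAt.2 fun t => (hL_deriv t).continuousAt
  have hL_eq : ∀ t ≥ (0:ℝ), cumInt S lam y i t = L t := by
    intro t ht
    refine intervalIntegral.integral_congr fun h hh => ?_
    rw [uIcc_of_le ht] at hh
    simp [hlamφdef, hφ_eq h hh.1]
  have hL_lb : ∀ t ≥ (0:ℝ), lmin * t ≤ L t := by
    intro t ht
    have : ∫ h in (0:ℝ)..t, lmin ≤ ∫ h in (0:ℝ)..t, lamφ h := by
      refine intervalIntegral.integral_mono_on ht intervalIntegrable_const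
        (hlamφc.intervalIntegrable _ _) fun s _ => (hlam_bd _).1
    simpa [mul_comm] using this
  set E : ℝ → ℝ := fun t => exp (-(L t)) with hEdef
  have hEc : Continuous E := (hLc.neg).rexp
  have hE_deriv : ∀ t, HasDerivAt E (-(lamφ t) * E t) t := by
    intro t
    have := ((hL_deriv t).neg).exp
    simpa [hEdef, mul_comm] using this
  have hE_pos : ∀ t, 0 < E t := fun t => exp_pos _
  have hE_le : ∀ t ≥ (0:ℝ), E t ≤ exp (-lmin * t) := by
    intro t ht
    have := hL_lb t ht
    simp only [hEdef]
    exact exp_le_exp.2 (by linarith)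
  -- right derivative of f along the flow
  have hf_right : ∀ t ≥ (0:ℝ), HasDerivWithinAt (fun s => f (φ s, i)) (g (φ t, i)) (Ioi t) t := by
    intro t ht
    rw [hasDerivWithinAt_iff_tendsto_slope]
    have hIoi : Ioi t \ {t} = Ioi t := diff_singleton_eq_self (fun h => lt_irrefl t h)
    rw [hIoi]
    have hsub : Tendsto (fun s => s - t) (𝓝[>] t) (𝓝[>] (0:ℝ)) := by
      rw [tendsto_nhdsWithin_iff]
      constructor
      · have : Tendsto (fun s : ℝ => s - t) (𝓝 t) (𝓝 (t - t)) :=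
          (continuous_sub_right t).tendsto t
        simpa using this.mono_left nhdsWithin_le_nhds
      · filter_upwards [self_mem_nhdsWithin] with s hs
        exact mem_Ioi.2 (sub_pos.2 (mem_Ioi.1 hs))
    have hcomp := (hlim (φ t, i)).comp hsub
    refine hcomp.congr' ?_
    filter_upwards [self_mem_nhdsWithin] with s hs
    have hst : t ≤ s := le_of_lt hs
    have hflow : φ s = S i (s - t) (φ t) := by
      rw [hφ_eq s (ht.trans hst), hφ_eq t ht, ← hS_add i (s - t) (by linarith) t ht y]
      ring_nf
    simp only [Function.comp, slope_def_field, hflow]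
  -- F and its right derivative
  set F : ℝ → ℝ := fun t => E t * f (φ t, i) with hFdef
  have hFc : Continuous F := hEc.mul (hf_cont.comp (by fun_prop))
  set G1 : ℝ → ℝ := fun t => lamφ t * E t * f (φ t, i) with hG1def
  set G2 : ℝ → ℝ := fun t => E t * g (φ t, i) with hG2def
  have hG1c : Continuous G1 := by
    exact (hlamφc.mul hEc).mul (hf_cont.comp (by fun_prop))
  have hG2c : Continuous G2 := hEc.mul (hg_cont.comp (by fun_prop))
  have hF_deriv : ∀ t ≥ (0:ℝ), HasDerivWithinAt F (G2 t - G1 t) (Ioi t) t := by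
    intro t ht
    have := ((hE_deriv t).hasDerivWithinAt (s := Ioi t)).fun_mul (hf_right t ht)
    refine this.congr_deriv ?_
    simp only [hG1def, hG2def]; ring
  -- FTC on [0, T]
  have hFTC : ∀ T ≥ (0:ℝ), ∫ t in (0:ℝ)..T, (G1 t - G2 t) = f (y, i) - F T := by
    intro T hT
    have h1 : ∫ t in (0:ℝ)..T, (G2 t - G1 t) = F T - F 0 := by
      refine intervalIntegral.integral_eq_sub_of_hasDeriv_right_of_le hT hFc.continuousOn
        (fun t htt => hF_deriv t (le_of_lt htt.1)) ((hG2c.sub hG1c).intervalIntegrable _ _)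
    have hF0 : F 0 = f (y, i) := by
      simp [hFdef, hEdef, hLdef, hφ_eq 0 le_rfl, hS_zero]
    have : ∫ t in (0:ℝ)..T, (G1 t - G2 t) = -∫ t in (0:ℝ)..T, (G2 t - G1 t) := by
      rw [← intervalIntegral.integral_neg]; congr 1; ext t; ring
    rw [this, h1, hF0]; ring
  -- integrability on Ioi 0
  have hMf0 : 0 ≤ Mf := le_trans (abs_nonneg _) (hMf (y, i))
  have hMg0 : 0 ≤ Mg := le_trans (abs_nonneg _) (hMg (y, i))
  have hlmax : 0 < lmax := lt_of_lt_of_le hlmin (le_trans (hlam_bd y).1 (hlam_bd y).2)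
  have hexp_int : ∀ c : ℝ, IntegrableOn (fun t => c * exp (-lmin * t)) (Ioi (0:ℝ)) :=
    fun c => (exp_neg_integrableOn_Ioi 0 hlmin).const_mul c
  have hG1int : IntegrableOn G1 (Ioi (0:ℝ)) := by
    refine Integrable.mono' (hexp_int (lmax * Mf)) hG1c.aestronglyMeasurable ?_
    filter_upwards [ae_restrict_mem measurableSet_Ioi] with t ht
    have ht0 : (0:ℝ) ≤ t := le_of_lt ht
    have h1 : |lamφ t| ≤ lmax := abs_le.2 ⟨by linarith [(hlam_bd (φ t)).1], (hlam_bd (φ t)).2⟩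
    have h2 : |E t| ≤ exp (-lmin * t) := by
      rw [abs_of_pos (hE_pos t)]; exact hE_le t ht0
    calc ‖G1 t‖ = |lamφ t| * |E t| * |f (φ t, i)| := by
          simp [hG1def, abs_mul]
      _ ≤ lmax * exp (-lmin * t) * Mf := by
          refine mul_le_mul (mul_le_mul h1 h2 (abs_nonneg _) (le_of_lt hlmax)) (hMf _)
            (abs_nonneg _) (by positivity)
      _ = lmax * Mf * exp (-lmin * t) := by ring
  have hG2int : IntegrableOn G2 (Ioi (0:ℝ)) := by
    refine Integrable.mono' (hexp_int Mg) hG2c.aestronglyMeasurable ?_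
    filter_upwards [ae_restrict_mem measurableSet_Ioi] with t ht
    have h2 : |E t| ≤ exp (-lmin * t) := by
      rw [abs_of_pos (hE_pos t)]; exact hE_le t (le_of_lt ht)
    calc ‖G2 t‖ = |E t| * |g (φ t, i)| := by simp [hG2def, abs_mul]
      _ ≤ exp (-lmin * t) * Mg := mul_le_mul h2 (hMg _) (abs_nonneg _) (exp_pos _).le
      _ = Mg * exp (-lmin * t) := by ring
  -- limit T → ∞
  have hFlim : Tendsto F atTop (𝓝 0) := by
    refine squeeze_zero_norm' (a := fun T => Mf * exp (-lmin * T)) ?_ ?_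
    · filter_upwards [eventually_ge_atTop (0:ℝ)] with T hT
      calc ‖F T‖ = |E T| * |f (φ T, i)| := by simp [hFdef, abs_mul]
        _ ≤ exp (-lmin * T) * Mf := by
            refine mul_le_mul ?_ (hMf _) (abs_nonneg _) (exp_pos _).le
            rw [abs_of_pos (hE_pos T)]; exact hE_le T hT
        _ = Mf * exp (-lmin * T) := by ring
    · have h1 : Tendsto (fun T : ℝ => -lmin * T) atTop atBot :=
        tendsto_id.const_mul_atTop_of_neg (by linarith)
      have := (tendsto_exp_atBot).comp h1
      simpa using this.const_mul Mf
  have hlim1 : Tendsto (fun T => ∫ t in (0:ℝ)..T, (G1 t - G2 t)) atTop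
      (𝓝 (∫ t in Ioi (0:ℝ), (G1 t - G2 t))) :=
    intervalIntegral_tendsto_integral_Ioi 0 (hG1int.sub hG2int) tendsto_id
  have hlim2 : Tendsto (fun T => ∫ t in (0:ℝ)..T, (G1 t - G2 t)) atTop (𝓝 (f (y, i))) := by
    have : Tendsto (fun T => f (y, i) - F T) atTop (𝓝 (f (y, i) - 0)) :=
      tendsto_const_nhds.sub hFlim
    rw [sub_zero] at this
    refine this.congr' ?_
    filter_upwards [eventually_ge_atTop (0:ℝ)] with T hT
    exact (hFTC T hT).symm
  have hkey : ∫ t in Ioi (0:ℝ), (G1 t - G2 t) = f (y, i) := tendsto_nhds_unique hlim1 hlim2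
  -- identify Gop with the Ioi-integrals
  have hGop1 : Gop S lam f (y, i) = ∫ t in Ioi (0:ℝ), G1 t := by
    refine setIntegral_congr_fun measurableSet_Ioi fun t ht => ?_
    have ht0 : (0:ℝ) ≤ t := le_of_lt ht
    simp [hG1def, hEdef, hlamφdef, hφ_eq t ht0, hL_eq t ht0]
  have hGop2 : Gop S lam (fun z => g z / lam z.1) (y, i) = ∫ t in Ioi (0:ℝ), G2 t := by
    refine setIntegral_congr_fun measurableSet_Ioi fun t ht => ?_
    have ht0 : (0:ℝ) ≤ t := le_of_lt ht
    have hne : lam (S i t y) ≠ 0 := by linarith [(hlam_bd (S i t y)).1]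
    simp only [Gop, hG2def, hEdef, hlamφdef, hφ_eq t ht0, hL_eq t ht0]
    field_simp
  rw [hGop1, hGop2, ← integral_sub hG1int hG2int, hkey]
end
end

section
/- For every x ∈ X, every t ≥ 0 and every n ∈ ℕ₀, the n-step measure of the kernel P̄ started at (x,0) satisfies ∫_{X̄} e^{λ̲ s} 1_{[0,t]}(s) P̄ⁿ((x,0), d(u,j,s)) ≤ (λ̄ t)ⁿ / n!. -/
open MeasureTheory ProbabilityTheory Real Set Filter Topology

noncomputable section

section AuxJump

set_option linter.unusedSectionVars false

lemma kIter_succ_comm {Z : Type*} [MeasurableSpace Z] (κ : Kernel Z Z) [IsSFiniteKernel κ]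
    (n : ℕ) : kIter κ (n+1) = kIter κ n ∘ₖ κ := by
  induction n with
  | zero => show κ ∘ₖ Kernel.id = Kernel.id ∘ₖ κ; rw [Kernel.comp_id, Kernel.id_comp]
  | succ n ih =>
    show κ ∘ₖ kIter κ (n+1) = kIter κ (n+1) ∘ₖ κ
    conv_lhs => rw [ih]
    rw [← Kernel.comp_assoc]
    rfl

variable {Y : Type*} [MetricSpace Y] {I : Type*}

lemma contOn_lamS {S : I → ℝ → Y → Y}
    (hS_cont : ∀ i, ContinuousOn (fun p : ℝ × Y => S i p.1 p.2) (Ici (0:ℝ) ×ˢ (univ : Set Y)))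
    {lam : Y → ℝ} (hlam_cont : Continuous lam) (i : I) (y : Y) :
    ContinuousOn (fun τ => lam (S i τ y)) (Ici (0:ℝ)) := by
  have h1 : ContinuousOn (fun τ : ℝ => S i τ y) (Ici (0:ℝ)) := by
    have := (hS_cont i).comp ((continuous_id.prodMk continuous_const :
        Continuous fun τ : ℝ => (τ, y))).continuousOn
      (fun τ hτ => by exact ⟨hτ, mem_univ y⟩)
    exact this
  exact hlam_cont.comp_continuousOn h1

lemma contOn_cumInt {S : I → ℝ → Y → Y}
    (hS_cont : ∀ i, ContinuousOn (fun p : ℝ × Y => S i p.1 p.2) (Ici (0:ℝ) ×ˢ (univ : Set Y)))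
    {lam : Y → ℝ} (hlam_cont : Continuous lam) (i : I) (y : Y) :
    ContinuousOn (fun τ => cumInt S lam y i τ) (Ici (0:ℝ)) := by
  intro x hx
  have hxx : x < x + 1 := lt_add_one x
  have hint : IntegrableOn (fun h => lam (S i h y)) (Icc 0 (x+1)) volume :=
    ((contOn_lamS hS_cont hlam_cont i y).mono Icc_subset_Ici_self).integrableOn_compact
      isCompact_Icc
  have h1 : ContinuousOn (fun τ => ∫ h in Ioc (0:ℝ) τ, lam (S i h y)) (Icc 0 (x+1)) :=
    intervalIntegral.continuousOn_primitive hint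
  have heq : ∀ τ ∈ Icc (0:ℝ) (x+1), (fun τ => ∫ h in Ioc (0:ℝ) τ, lam (S i h y)) τ
      = cumInt S lam y i τ := by
    intro τ hτ
    rw [cumInt, intervalIntegral.integral_of_le hτ.1]
  have h2 : ContinuousWithinAt (fun τ => cumInt S lam y i τ) (Icc 0 (x+1)) x := by
    have := (h1 x ⟨hx, hxx.le⟩).congr (fun τ hτ => (heq τ hτ).symm) ((heq x ⟨hx, hxx.le⟩).symm)
    exact this
  refine h2.mono_of_mem_nhdsWithin ?_
  have : Icc (0:ℝ) (x+1) = Ici 0 ∩ Iic (x+1) := (Ici_inter_Iic).symm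
  rw [this]
  exact inter_mem_nhdsWithin _ (Iic_mem_nhds hxx)

lemma cumInt_ge {S : I → ℝ → Y → Y}
    (hS_cont : ∀ i, ContinuousOn (fun p : ℝ × Y => S i p.1 p.2) (Ici (0:ℝ) ×ˢ (univ : Set Y)))
    {lam : Y → ℝ} (hlam_cont : Continuous lam) {lmin lmax : ℝ}
    (hlam_bd : ∀ y, lmin ≤ lam y ∧ lam y ≤ lmax) (i : I) (y : Y)
    {τ : ℝ} (hτ : 0 ≤ τ) : lmin * τ ≤ cumInt S lam y i τ := by
  have hInt : IntervalIntegrable (fun h => lam (S i h y)) volume 0 τ := by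
    apply ContinuousOn.intervalIntegrable
    rw [uIcc_of_le hτ]
    exact (contOn_lamS hS_cont hlam_cont i y).mono Icc_subset_Ici_self
  have := intervalIntegral.integral_mono_on hτ (intervalIntegrable_const (c := lmin)) hInt
    (fun x _ => (hlam_bd _).1)
  simpa [mul_comm, cumInt] using this

variable [MeasurableSpace Y] [BorelSpace Y]
  [Fintype I] [MeasurableSpace I] [MeasurableSingletonClass I]

lemma pbar_set {S : I → ℝ → Y → Y}
    (hS_cont : ∀ i, ContinuousOn (fun p : ℝ × Y => S i p.1 p.2) (Ici (0:ℝ) ×ˢ (univ : Set Y)))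
    {lam : Y → ℝ} (hlam_cont : Continuous lam) {lmin lmax : ℝ} (hlmin : 0 < lmin)
    (hlam_bd : ∀ y, lmin ≤ lam y ∧ lam y ≤ lmax)
    {pm : I → I → Y → ℝ}
    (hpm_sum : ∀ i y, ∑ j, pm i j y = 1)
    {J : Kernel Y Y} [IsMarkovKernel J]
    {Pbar : Kernel (Y × I × ℝ) (Y × I × ℝ)} [IsMarkovKernel Pbar]
    (hPbar : ∀ y i, ∀ s ≥ (0:ℝ), ∀ A : Set (Y × I × ℝ), MeasurableSet A →
      ((Pbar (y, i, s)) A).toReal =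
        ∫ t in Ioi (0:ℝ), lam (S i t y) * exp (-(cumInt S lam y i t)) *
          ∫ u, ∑ j, pm i j u * A.indicator (fun _ => (1:ℝ)) (u, j, s + t) ∂(J (S i t y)))
    (y : Y) (i : I) (s : ℝ) (hs : 0 ≤ s) (C : Set ℝ) (hC : MeasurableSet C) :
    Pbar (y, i, s) ((fun w : Y × I × ℝ => w.2.2) ⁻¹' C)
      = ∫⁻ τ in Ioi (0:ℝ),
          ENNReal.ofReal (lam (S i τ y) * exp (-(cumInt S lam y i τ)) *
            C.indicator (fun _ => (1:ℝ)) (s + τ)) := by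
  have hmeas : Measurable fun w : Y × I × ℝ => w.2.2 := measurable_snd.comp measurable_snd
  have hA : MeasurableSet ((fun w : Y × I × ℝ => w.2.2) ⁻¹' C) := hmeas hC
  have h1 := hPbar y i s hs _ hA
  have h2 : ∀ τ : ℝ, (∫ u, ∑ j, pm i j u *
      ((fun w : Y × I × ℝ => w.2.2) ⁻¹' C).indicator (fun _ => (1:ℝ)) (u, j, s + τ)
        ∂(J (S i τ y))) = C.indicator (fun _ => (1:ℝ)) (s + τ) := by
    intro τ
    have hu : ∀ u : Y, (∑ j, pm i j u *
        ((fun w : Y × I × ℝ => w.2.2) ⁻¹' C).indicator (fun _ => (1:ℝ)) (u, j, s + τ))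
          = C.indicator (fun _ => (1:ℝ)) (s + τ) := by
      intro u
      have hj : ∀ j : I, ((fun w : Y × I × ℝ => w.2.2) ⁻¹' C).indicator
          (fun _ => (1:ℝ)) (u, j, s + τ) = C.indicator (fun _ => (1:ℝ)) (s + τ) := by
        intro j
        simp only [Set.indicator, Set.mem_preimage]; rfl
      simp_rw [hj]
      rw [← Finset.sum_mul, hpm_sum i u, one_mul]
    simp_rw [hu]
    simp [integral_const]
  simp_rw [h2] at h1
  -- integrability of the density
  set g : ℝ → ℝ := fun τ => lam (S i τ y) * exp (-(cumInt S lam y i τ)) *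
      C.indicator (fun _ => (1:ℝ)) (s + τ) with hg
  have hlamae : AEMeasurable (fun τ => lam (S i τ y)) (volume.restrict (Ioi (0:ℝ))) :=
    ((contOn_lamS hS_cont hlam_cont i y).mono Ioi_subset_Ici_self).aemeasurable
      measurableSet_Ioi
  have hcumae : AEMeasurable (fun τ => exp (-(cumInt S lam y i τ)))
      (volume.restrict (Ioi (0:ℝ))) := by
    have hc : AEMeasurable (fun τ => cumInt S lam y i τ) (volume.restrict (Ioi (0:ℝ))) :=
      ((contOn_cumInt hS_cont hlam_cont i y).mono Ioi_subset_Ici_self).aemeasurable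
        measurableSet_Ioi
    exact Real.measurable_exp.comp_aemeasurable hc.neg
  have hindm : Measurable (fun τ : ℝ => C.indicator (fun _ => (1:ℝ)) (s + τ)) :=
    (measurable_const.indicator hC).comp (measurable_const_add s)
  have hgsm : AEStronglyMeasurable g (volume.restrict (Ioi (0:ℝ))) :=
    ((hlamae.mul hcumae).mul hindm.aemeasurable).aestronglyMeasurable
  have hgnn : ∀ τ : ℝ, 0 ≤ g τ := by
    intro τ
    apply mul_nonneg (mul_nonneg (le_trans hlmin.le (hlam_bd _).1) (exp_nonneg _))
    exact Set.indicator_nonneg (fun _ _ => zero_le_one) _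
  have hint : IntegrableOn g (Ioi (0:ℝ)) volume := by
    have hbd : IntegrableOn (fun τ : ℝ => lmax * exp (-lmin * τ)) (Ioi (0:ℝ)) volume :=
      (exp_neg_integrableOn_Ioi 0 hlmin).const_mul lmax
    refine Integrable.mono' hbd hgsm ?_
    refine (ae_restrict_iff' measurableSet_Ioi).2 (ae_of_all _ fun τ hτ => ?_)
    rw [Real.norm_of_nonneg (hgnn τ)]
    have h3 : g τ ≤ lam (S i τ y) * exp (-(cumInt S lam y i τ)) := by
      rw [hg]
      have := Set.indicator_le_self' (f := fun _ => (1:ℝ))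
        (fun _ _ => zero_le_one) (s := C)
      calc lam (S i τ y) * exp (-(cumInt S lam y i τ)) *
            C.indicator (fun _ => (1:ℝ)) (s + τ)
          ≤ lam (S i τ y) * exp (-(cumInt S lam y i τ)) * 1 := by
            apply mul_le_mul_of_nonneg_left _ (mul_nonneg
              (le_trans hlmin.le (hlam_bd _).1) (exp_nonneg _))
            exact Set.indicator_le' (fun _ _ => le_refl 1) (fun _ _ => zero_le_one) _
        _ = lam (S i τ y) * exp (-(cumInt S lam y i τ)) := mul_one _
    refine h3.trans ?_
    rw [neg_mul]
    apply mul_le_mul (hlam_bd _).2 (exp_le_exp.2 (neg_le_neg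
      (cumInt_ge hS_cont hlam_cont hlam_bd i y (le_of_lt hτ)))) (exp_nonneg _)
      (le_trans hlmin.le (by linarith [(hlam_bd (S i τ y)).1, (hlam_bd (S i τ y)).2]))
  have hfin : Pbar (y, i, s) ((fun w : Y × I × ℝ => w.2.2) ⁻¹' C) ≠ ⊤ := measure_ne_top _ _
  rw [← ENNReal.ofReal_toReal hfin, h1,
    ofReal_integral_eq_lintegral_ofReal hint (ae_of_all _ hgnn)]

lemma pbar_map {S : I → ℝ → Y → Y}
    (hS_cont : ∀ i, ContinuousOn (fun p : ℝ × Y => S i p.1 p.2) (Ici (0:ℝ) ×ˢ (univ : Set Y)))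
    {lam : Y → ℝ} (hlam_cont : Continuous lam) {lmin lmax : ℝ} (hlmin : 0 < lmin)
    (hlam_bd : ∀ y, lmin ≤ lam y ∧ lam y ≤ lmax)
    {pm : I → I → Y → ℝ}
    (hpm_sum : ∀ i y, ∑ j, pm i j y = 1)
    {J : Kernel Y Y} [IsMarkovKernel J]
    {Pbar : Kernel (Y × I × ℝ) (Y × I × ℝ)} [IsMarkovKernel Pbar]
    (hPbar : ∀ y i, ∀ s ≥ (0:ℝ), ∀ A : Set (Y × I × ℝ), MeasurableSet A →
      ((Pbar (y, i, s)) A).toReal =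
        ∫ t in Ioi (0:ℝ), lam (S i t y) * exp (-(cumInt S lam y i t)) *
          ∫ u, ∑ j, pm i j u * A.indicator (fun _ => (1:ℝ)) (u, j, s + t) ∂(J (S i t y)))
    (y : Y) (i : I) (s : ℝ) (hs : 0 ≤ s) :
    (Pbar (y, i, s)).map (fun w : Y × I × ℝ => w.2.2)
      = ((volume.restrict (Ioi (0:ℝ))).withDensity
          (fun τ => ENNReal.ofReal (lam (S i τ y) * exp (-(cumInt S lam y i τ))))).map
          (fun τ => s + τ) := by
  have hmeas : Measurable fun w : Y × I × ℝ => w.2.2 := measurable_snd.comp measurable_snd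
  ext C hC
  rw [Measure.map_apply hmeas hC, Measure.map_apply (measurable_const_add s) hC,
    withDensity_apply _ ((measurable_const_add s) hC),
    pbar_set hS_cont hlam_cont hlmin hlam_bd hpm_sum hPbar y i s hs C hC]
  rw [Measure.restrict_restrict ((measurable_const_add s) hC)]
  rw [← lintegral_indicator, ← lintegral_indicator]
  · apply lintegral_congr
    intro τ
    by_cases hτ : τ ∈ Ioi (0:ℝ)
    · by_cases hm : s + τ ∈ C
      · simp [Set.indicator_apply, hτ, hm, Set.mem_preimage, Set.mem_inter_iff]
      · simp [Set.indicator_apply, hτ, hm, Set.mem_preimage, Set.mem_inter_iff]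
    · simp [Set.indicator_apply, hτ, Set.mem_inter_iff]
  · exact ((measurable_const_add s) hC).inter measurableSet_Ioi
  · exact measurableSet_Ioi

lemma pbar_lintegral {S : I → ℝ → Y → Y}
    (hS_cont : ∀ i, ContinuousOn (fun p : ℝ × Y => S i p.1 p.2) (Ici (0:ℝ) ×ˢ (univ : Set Y)))
    {lam : Y → ℝ} (hlam_cont : Continuous lam) {lmin lmax : ℝ} (hlmin : 0 < lmin)
    (hlam_bd : ∀ y, lmin ≤ lam y ∧ lam y ≤ lmax)
    {pm : I → I → Y → ℝ}
    (hpm_sum : ∀ i y, ∑ j, pm i j y = 1)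
    {J : Kernel Y Y} [IsMarkovKernel J]
    {Pbar : Kernel (Y × I × ℝ) (Y × I × ℝ)} [IsMarkovKernel Pbar]
    (hPbar : ∀ y i, ∀ s ≥ (0:ℝ), ∀ A : Set (Y × I × ℝ), MeasurableSet A →
      ((Pbar (y, i, s)) A).toReal =
        ∫ t in Ioi (0:ℝ), lam (S i t y) * exp (-(cumInt S lam y i t)) *
          ∫ u, ∑ j, pm i j u * A.indicator (fun _ => (1:ℝ)) (u, j, s + t) ∂(J (S i t y)))
    (y : Y) (i : I) (s : ℝ) (hs : 0 ≤ s) {ψ : ℝ → ENNReal} (hψ : Measurable ψ) :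
    ∫⁻ w, ψ w.2.2 ∂(Pbar (y, i, s))
      = ∫⁻ τ in Ioi (0:ℝ),
          ENNReal.ofReal (lam (S i τ y) * exp (-(cumInt S lam y i τ))) * ψ (s + τ) := by
  have hmeas : Measurable fun w : Y × I × ℝ => w.2.2 := measurable_snd.comp measurable_snd
  have hρ : AEMeasurable (fun τ => ENNReal.ofReal (lam (S i τ y) * exp (-(cumInt S lam y i τ))))
      (volume.restrict (Ioi (0:ℝ))) := by
    have hlamae : AEMeasurable (fun τ => lam (S i τ y)) (volume.restrict (Ioi (0:ℝ))) :=
      ((contOn_lamS hS_cont hlam_cont i y).mono Ioi_subset_Ici_self).aemeasurable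
        measurableSet_Ioi
    have hc : AEMeasurable (fun τ => cumInt S lam y i τ) (volume.restrict (Ioi (0:ℝ))) :=
      ((contOn_cumInt hS_cont hlam_cont i y).mono Ioi_subset_Ici_self).aemeasurable
        measurableSet_Ioi
    exact (hlamae.mul (Real.measurable_exp.comp_aemeasurable hc.neg)).ennreal_ofReal
  have hg : AEMeasurable (fun a => ψ (s + a)) (volume.restrict (Ioi (0:ℝ))) :=
    (hψ.comp (measurable_const_add s)).aemeasurable
  rw [← lintegral_map hψ hmeas,
    pbar_map hS_cont hlam_cont hlmin hlam_bd hpm_sum hPbar y i s hs,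
    lintegral_map hψ (measurable_const_add s),
    lintegral_withDensity_eq_lintegral_mul₀ hρ hg]
  rfl

def Ffun (lmin t r : ℝ) : ENNReal :=
  ENNReal.ofReal (exp (lmin * r) * (Icc (0:ℝ) t).indicator (fun _ => (1:ℝ)) r)

def Bnd (lmin lmax t : ℝ) (n : ℕ) (s : ℝ) : ENNReal :=
  (Iic t).indicator
    (fun s => ENNReal.ofReal (exp (lmin * s) * (lmax * (t - s)) ^ n / n.factorial)) s

lemma Ffun_measurable (lmin t : ℝ) : Measurable (Ffun lmin t) := by
  apply Measurable.ennreal_ofReal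
  exact ((Real.continuous_exp.comp (continuous_const.mul continuous_id)).measurable).mul
    (measurable_const.indicator measurableSet_Icc)

lemma Bnd_measurable (lmin lmax t : ℝ) (n : ℕ) : Measurable (Bnd lmin lmax t n) := by
  apply Measurable.indicator _ measurableSet_Iic
  apply Measurable.ennreal_ofReal
  exact (((Real.continuous_exp.comp (continuous_const.mul continuous_id)).mul
    ((continuous_const.mul (continuous_const.sub continuous_id)).pow n)).div_const
      _).measurable

lemma density_le {S : I → ℝ → Y → Y}
    (hS_cont : ∀ i, ContinuousOn (fun p : ℝ × Y => S i p.1 p.2) (Ici (0:ℝ) ×ˢ (univ : Set Y)))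
    {lam : Y → ℝ} (hlam_cont : Continuous lam) {lmin lmax : ℝ} (hlmin : 0 < lmin)
    (hlam_bd : ∀ y, lmin ≤ lam y ∧ lam y ≤ lmax) (i : I) (y : Y) {τ : ℝ} (hτ : 0 ≤ τ) :
    lam (S i τ y) * exp (-(cumInt S lam y i τ)) ≤ lmax * exp (-(lmin * τ)) := by
  apply mul_le_mul (hlam_bd _).2 (exp_le_exp.2 (neg_le_neg
    (cumInt_ge hS_cont hlam_cont hlam_bd i y hτ))) (exp_nonneg _)
    (le_trans hlmin.le (by linarith [(hlam_bd (S i τ y)).1, (hlam_bd (S i τ y)).2]))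

lemma calc_step {lmin lmax : ℝ} (hlmin : 0 < lmin) (hml : lmin ≤ lmax) {t : ℝ}
    (n : ℕ) {s : ℝ} (hs : 0 ≤ s) :
    ∫⁻ τ in Ioi (0:ℝ), ENNReal.ofReal (lmax * exp (-(lmin * τ))) * Bnd lmin lmax t n (s + τ)
      ≤ Bnd lmin lmax t (n + 1) s := by
  have hlmax : (0:ℝ) ≤ lmax := le_trans hlmin.le hml
  by_cases hst : s ≤ t
  · set T : ℝ := t - s with hT
    have hT0 : 0 ≤ T := by simp [hT]; linarith
    set c : ℝ := exp (lmin * s) * lmax ^ (n + 1) / n.factorial with hc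
    set f : ℝ → ℝ := fun τ => c * (T - τ) ^ n with hf
    have hpt : ∀ τ ∈ Ioi (0:ℝ),
        ENNReal.ofReal (lmax * exp (-(lmin * τ))) * Bnd lmin lmax t n (s + τ)
          = ENNReal.ofReal ((Ioc (0:ℝ) T).indicator f τ) := by
      intro τ hτ
      rw [mem_Ioi] at hτ
      by_cases hτT : τ ≤ T
      · have h1 : s + τ ≤ t := by simp [hT] at hτT; linarith
        rw [Bnd, Set.indicator_of_mem (mem_Iic.2 h1),
          Set.indicator_of_mem (mem_Ioc.2 ⟨hτ, hτT⟩),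
          ← ENNReal.ofReal_mul (mul_nonneg hlmax (exp_nonneg _))]
        congr 1
        have h2 : t - (s + τ) = T - τ := by rw [hT]; ring
        rw [h2, hf, hc, mul_add, exp_add, mul_pow, exp_neg]
        field_simp
        ring
      · rw [Bnd, Set.indicator_of_notMem (by simp [hT] at hτT ⊢; linarith),
          Set.indicator_of_notMem (by simp [hτT]), mul_zero, ENNReal.ofReal_zero]
    rw [setLIntegral_congr_fun measurableSet_Ioi hpt]
    have hfint : Integrable ((Ioc (0:ℝ) T).indicator f) volume := by
      apply IntegrableOn.integrable_indicator _ measurableSet_Ioc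
      exact (((continuous_const.mul ((continuous_const.sub continuous_id).pow
        n)).integrableOn_Icc (a := 0) (b := T))).mono_set Ioc_subset_Icc_self
    have hfnn : 0 ≤ᵐ[volume.restrict (Ioi (0:ℝ))] (Ioc (0:ℝ) T).indicator f := by
      refine ae_of_all _ fun τ => Set.indicator_nonneg (fun τ hτ => ?_) τ
      exact mul_nonneg (div_nonneg (mul_nonneg (exp_nonneg _) (pow_nonneg hlmax _))
        (Nat.cast_nonneg _)) (pow_nonneg (by linarith [hτ.2]) n)
    rw [← ofReal_integral_eq_lintegral_ofReal hfint.restrict hfnn]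
    have hval : ∫ τ in Ioi (0:ℝ), (Ioc (0:ℝ) T).indicator f τ
        = c * (T ^ (n + 1) / (n + 1)) := by
      rw [integral_indicator measurableSet_Ioc,
        Measure.restrict_restrict measurableSet_Ioc,
        Set.inter_eq_self_of_subset_left (fun x hx => hx.1),
        ← intervalIntegral.integral_of_le hT0, hf,
        intervalIntegral.integral_const_mul]
      congr 1
      have := intervalIntegral.integral_comp_sub_left (a := 0) (b := T)
        (fun u : ℝ => u ^ n) T
      rw [this, sub_self, sub_zero, integral_pow]
      simp
    rw [hval, Bnd, Set.indicator_of_mem (mem_Iic.2 hst)]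
    apply le_of_eq
    congr 1
    rw [hc]
    have hfact : ((n + 1).factorial : ℝ) = (n + 1) * n.factorial := by
      rw [Nat.factorial_succ]; push_cast; ring
    rw [mul_pow, hfact, hT]
    have hn : (0:ℝ) < n.factorial := by positivity
    field_simp
  · have hz : ∀ τ ∈ Ioi (0:ℝ),
        ENNReal.ofReal (lmax * exp (-(lmin * τ))) * Bnd lmin lmax t n (s + τ)
          = 0 := by
      intro τ hτ
      rw [mem_Ioi] at hτ
      rw [Bnd, Set.indicator_of_notMem (by simp; linarith [not_le.1 hst]), mul_zero]
    rw [setLIntegral_congr_fun measurableSet_Ioi hz, lintegral_zero]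
    exact zero_le

lemma main_bound {S : I → ℝ → Y → Y}
    (hS_cont : ∀ i, ContinuousOn (fun p : ℝ × Y => S i p.1 p.2) (Ici (0:ℝ) ×ˢ (univ : Set Y)))
    {lam : Y → ℝ} (hlam_cont : Continuous lam) {lmin lmax : ℝ} (hlmin : 0 < lmin)
    (hlam_bd : ∀ y, lmin ≤ lam y ∧ lam y ≤ lmax)
    {pm : I → I → Y → ℝ}
    (hpm_sum : ∀ i y, ∑ j, pm i j y = 1)
    {J : Kernel Y Y} [IsMarkovKernel J]
    {Pbar : Kernel (Y × I × ℝ) (Y × I × ℝ)} [IsMarkovKernel Pbar]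
    (hPbar : ∀ y i, ∀ s ≥ (0:ℝ), ∀ A : Set (Y × I × ℝ), MeasurableSet A →
      ((Pbar (y, i, s)) A).toReal =
        ∫ t in Ioi (0:ℝ), lam (S i t y) * exp (-(cumInt S lam y i t)) *
          ∫ u, ∑ j, pm i j u * A.indicator (fun _ => (1:ℝ)) (u, j, s + t) ∂(J (S i t y)))
    (hml : lmin ≤ lmax) (t : ℝ) (n : ℕ) :
    ∀ (y : Y) (i : I) (s : ℝ), 0 ≤ s →
      ∫⁻ q : Y × I × ℝ, Ffun lmin t q.2.2 ∂(kIter Pbar n (y, i, s))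
        ≤ Bnd lmin lmax t n s := by
  have hmeas : Measurable fun w : Y × I × ℝ => w.2.2 := measurable_snd.comp measurable_snd
  have hFm : Measurable fun q : Y × I × ℝ => Ffun lmin t q.2.2 :=
    (Ffun_measurable lmin t).comp hmeas
  induction n with
  | zero =>
    intro y i s hs
    rw [show kIter Pbar 0 = Kernel.id from rfl, Kernel.id_apply, lintegral_dirac' _ hFm]
    by_cases hst : s ≤ t
    · rw [Bnd, Set.indicator_of_mem (mem_Iic.2 hst), Ffun,
        Set.indicator_of_mem (mem_Icc.2 ⟨hs, hst⟩)]
      simp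
    · rw [Ffun, Set.indicator_of_notMem (fun hmem => hst hmem.2), mul_zero,
        ENNReal.ofReal_zero]
      exact zero_le
  | succ n ih =>
    intro y i s hs
    rw [kIter_succ_comm, Kernel.lintegral_comp _ _ _ hFm]
    have hae : ∀ᵐ w ∂(Pbar (y, i, s)), 0 ≤ w.2.2 := by
      rw [ae_iff]
      have hset : {w : Y × I × ℝ | ¬ 0 ≤ w.2.2} = (fun w : Y × I × ℝ => w.2.2) ⁻¹' (Iio 0) :=
        Set.ext fun w => by simp [not_le]
      rw [hset, pbar_set hS_cont hlam_cont hlmin hlam_bd hpm_sum hPbar y i s hs _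
        measurableSet_Iio]
      have hz : ∀ τ ∈ Ioi (0:ℝ), ENNReal.ofReal (lam (S i τ y) *
          exp (-(cumInt S lam y i τ)) * (Iio (0:ℝ)).indicator (fun _ => (1:ℝ)) (s + τ)) = 0 := by
        intro τ hτ
        rw [mem_Ioi] at hτ
        rw [Set.indicator_of_notMem (by simp; linarith), mul_zero, ENNReal.ofReal_zero]
      rw [setLIntegral_congr_fun measurableSet_Ioi hz, lintegral_zero]
    have h1 : ∫⁻ w, (∫⁻ q, Ffun lmin t q.2.2 ∂(kIter Pbar n w)) ∂(Pbar (y, i, s))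
        ≤ ∫⁻ w, Bnd lmin lmax t n w.2.2 ∂(Pbar (y, i, s)) := by
      refine lintegral_mono_ae (hae.mono fun w hw => ?_)
      have := ih w.1 w.2.1 w.2.2 hw
      simpa using this
    refine h1.trans ?_
    rw [pbar_lintegral hS_cont hlam_cont hlmin hlam_bd hpm_sum hPbar y i s hs
      (Bnd_measurable lmin lmax t n)]
    have h2 : ∫⁻ τ in Ioi (0:ℝ), ENNReal.ofReal (lam (S i τ y) *
          exp (-(cumInt S lam y i τ))) * Bnd lmin lmax t n (s + τ)
        ≤ ∫⁻ τ in Ioi (0:ℝ), ENNReal.ofReal (lmax * exp (-(lmin * τ))) *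
          Bnd lmin lmax t n (s + τ) := by
      refine lintegral_mono_ae ((ae_restrict_iff' measurableSet_Ioi).2
        (ae_of_all _ fun τ hτ => ?_))
      exact mul_le_mul_left (ENNReal.ofReal_le_ofReal
        (density_le hS_cont hlam_cont hlmin hlam_bd i y (le_of_lt hτ))) _
    exact h2.trans (calc_step hlmin hml n hs)


end AuxJump

theorem jump_time_exp_moment
    {Y : Type*} [MetricSpace Y] [TopologicalSpace.SeparableSpace Y] [CompleteSpace Y]
    [MeasurableSpace Y] [BorelSpace Y]
    {I : Type*} [Fintype I] [Nonempty I] [TopologicalSpace I] [DiscreteTopology I]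
    [MeasurableSpace I] [MeasurableSingletonClass I]
    (S : I → ℝ → Y → Y)
    (hS_cont : ∀ i, ContinuousOn (fun p : ℝ × Y => S i p.1 p.2) (Ici (0:ℝ) ×ˢ (univ : Set Y)))
    (hS_zero : ∀ i y, S i 0 y = y)
    (hS_add : ∀ i, ∀ s ≥ (0:ℝ), ∀ t ≥ (0:ℝ), ∀ y, S i (s + t) y = S i s (S i t y))
    (lam : Y → ℝ) (hlam_cont : Continuous lam) (lmin lmax : ℝ) (hlmin : 0 < lmin)
    (hlam_bd : ∀ y, lmin ≤ lam y ∧ lam y ≤ lmax)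
    (pm : I → I → Y → ℝ) (hpm_cont : ∀ i j, Continuous (pm i j))
    (hpm_mem : ∀ i j y, pm i j y ∈ Icc (0:ℝ) 1) (hpm_sum : ∀ i y, ∑ j, pm i j y = 1)
    (J : Kernel Y Y) [IsMarkovKernel J]
    (Pbar : Kernel (Y × I × ℝ) (Y × I × ℝ)) [IsMarkovKernel Pbar]
    (hPbar : ∀ y i, ∀ s ≥ (0:ℝ), ∀ A : Set (Y × I × ℝ), MeasurableSet A →
      ((Pbar (y, i, s)) A).toReal =
        ∫ t in Ioi (0:ℝ), lam (S i t y) * exp (-(cumInt S lam y i t)) *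
          ∫ u, ∑ j, pm i j u * A.indicator (fun _ => (1:ℝ)) (u, j, s + t) ∂(J (S i t y))) :
    ∀ x : Y × I, ∀ t ≥ (0:ℝ), ∀ n : ℕ,
      ∫ q : Y × I × ℝ, exp (lmin * q.2.2) * (Icc (0:ℝ) t).indicator (fun _ => (1:ℝ)) q.2.2
          ∂(kIter Pbar n (x.1, x.2, 0)) ≤ (lmax * t) ^ n / n.factorial := by

  intro x t ht n
  have hml : lmin ≤ lmax := le_trans (hlam_bd x.1).1 (hlam_bd x.1).2
  have key := main_bound hS_cont hlam_cont hlmin hlam_bd hpm_sum hPbar hml t n x.1 x.2 0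
    le_rfl
  have hmeas : Measurable fun w : Y × I × ℝ => w.2.2 := measurable_snd.comp measurable_snd
  have h0 : ∫ q : Y × I × ℝ, exp (lmin * q.2.2) *
        (Icc (0:ℝ) t).indicator (fun _ => (1:ℝ)) q.2.2 ∂(kIter Pbar n (x.1, x.2, 0))
      = (∫⁻ q, Ffun lmin t q.2.2 ∂(kIter Pbar n (x.1, x.2, 0))).toReal := by
    have hsm : AEStronglyMeasurable (fun q : Y × I × ℝ => exp (lmin * q.2.2) *
        (Icc (0:ℝ) t).indicator (fun _ => (1:ℝ)) q.2.2) (kIter Pbar n (x.1, x.2, 0)) := by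
      apply Measurable.aestronglyMeasurable
      exact ((Real.continuous_exp.comp (continuous_const.mul continuous_id)).measurable.comp
        hmeas).mul ((measurable_const.indicator measurableSet_Icc).comp hmeas)
    rw [integral_eq_lintegral_of_nonneg_ae
      (ae_of_all _ fun q => mul_nonneg (exp_nonneg _)
        (Set.indicator_nonneg (fun _ _ => zero_le_one) _)) hsm]
    rfl
  rw [h0]
  refine ENNReal.toReal_le_of_le_ofReal
    (div_nonneg (pow_nonneg (mul_nonneg (le_trans hlmin.le hml) ht) n)
      (Nat.cast_nonneg _)) ?_
  refine key.trans_eq ?_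
  rw [Bnd, Set.indicator_of_mem (mem_Iic.2 ht)]
  norm_num
end
end

section
/- For every x ∈ X, every t ≥ 0 and every n ∈ ℕ₀, one has ∫_{X̄} 1_{[0,t]}(s) e^{−Λ(u,j,t−s)} P̄ⁿ((x,0), d(u,j,s)) ≤ e^{−λ̲ t} (λ̄ t)ⁿ / n!. (Probabilistically, this quantity is the probability that exactly n jumps of the piecewise deterministic Markov process occur up to time t, starting from x with zero initial clock.) -/
open MeasureTheory ProbabilityTheory Real Set Filter Topology

noncomputable section

/- ===== auxiliary lemmas ===== -/

lemma kIter_markov {Z : Type*} [MeasurableSpace Z] (κ : Kernel Z Z) [IsMarkovKernel κ] :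
    ∀ n, IsMarkovKernel (kIter κ n)
  | 0 => by rw [kIter]; infer_instance
  | n + 1 => by rw [kIter]; have := kIter_markov κ n; infer_instance

lemma kIter_succ' {Z : Type*} [MeasurableSpace Z] (κ : Kernel Z Z) [IsSFiniteKernel κ] (n : ℕ) :
    kIter κ (n + 1) = kIter κ n ∘ₖ κ := by
  induction n with
  | zero => show κ ∘ₖ Kernel.id = Kernel.id ∘ₖ κ; rw [Kernel.comp_id, Kernel.id_comp]
  | succ n ih =>
      show κ ∘ₖ kIter κ (n+1) = (κ ∘ₖ kIter κ n) ∘ₖ κ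
      rw [ih, Kernel.comp_assoc]

lemma integrable_of_bounded' {α : Type*} [MeasurableSpace α] (μ : Measure α) [IsFiniteMeasure μ]
    {f : α → ℝ} (hf : AEStronglyMeasurable f μ) {C : ℝ} (hC : ∀ z, ‖f z‖ ≤ C) :
    Integrable f μ :=
  Integrable.mono' (integrable_const C) hf (Filter.Eventually.of_forall hC)

lemma kernel_integral_comp {α β γ : Type*} [MeasurableSpace α] [MeasurableSpace β]
    [MeasurableSpace γ] (η : Kernel β γ) [IsMarkovKernel η] (κ : Kernel α β) [IsMarkovKernel κ]
    (a : α) {f : γ → ℝ} (hf : Measurable f) (h0 : ∀ z, 0 ≤ f z) {C : ℝ} (hC : ∀ z, f z ≤ C) :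
    ∫ z, f z ∂((η ∘ₖ κ) a) = ∫ b, (∫ z, f z ∂(η b)) ∂(κ a) := by
  have hnorm : ∀ z, ‖f z‖ ≤ C := fun z => by
    rw [Real.norm_eq_abs, abs_of_nonneg (h0 z)]; exact hC z
  have hint : ∀ (μ : Measure γ) [IsProbabilityMeasure μ], Integrable f μ := fun μ _ =>
    integrable_of_bounded' μ hf.aestronglyMeasurable hnorm
  have hF_sm : StronglyMeasurable (fun b => ∫ z, f z ∂(η b)) := by
    have := (hf.comp measurable_snd).stronglyMeasurable.integral_kernel_prod_right' (κ := η)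
    exact this
  have hF0 : ∀ b, 0 ≤ ∫ z, f z ∂(η b) := fun b => integral_nonneg h0
  rw [integral_eq_lintegral_of_nonneg_ae (Filter.Eventually.of_forall h0)
    hf.aestronglyMeasurable]
  rw [show (∫⁻ z, ENNReal.ofReal (f z) ∂((η ∘ₖ κ) a)) = ∫⁻ b, ∫⁻ z, ENNReal.ofReal (f z) ∂(η b) ∂(κ a) from Kernel.lintegral_comp η κ a (ENNReal.measurable_ofReal.comp hf)]
  have inner : ∀ b, ∫⁻ z, ENNReal.ofReal (f z) ∂(η b) = ENNReal.ofReal (∫ z, f z ∂(η b)) :=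
    fun b => (ofReal_integral_eq_lintegral_ofReal (hint _) (Filter.Eventually.of_forall h0)).symm
  rw [lintegral_congr inner]
  rw [integral_eq_lintegral_of_nonneg_ae (Filter.Eventually.of_forall hF0)
    hF_sm.aestronglyMeasurable]

lemma cumInt_lower {Y : Type*} [TopologicalSpace Y] {I : Type*}
    (S : I → ℝ → Y → Y)
    (hS_cont : ∀ i, ContinuousOn (fun p : ℝ × Y => S i p.1 p.2) (Ici (0:ℝ) ×ˢ (univ : Set Y)))
    (lam : Y → ℝ) (hlam_cont : Continuous lam) (lmin : ℝ)
    (hl : ∀ y, lmin ≤ lam y) (y : Y) (i : I) (τ : ℝ) (hτ : 0 ≤ τ) :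
    lmin * τ ≤ cumInt S lam y i τ := by
  have h1 : ContinuousOn (fun h : ℝ => lam (S i h y)) (Icc 0 τ) := by
    apply hlam_cont.comp_continuousOn
    refine (hS_cont i).comp (Continuous.continuousOn
      (continuous_id.prodMk continuous_const : Continuous fun h : ℝ => (h, y))) ?_
    exact fun h hh => ⟨hh.1, mem_univ _⟩
  have hInt : IntervalIntegrable (fun h => lam (S i h y)) volume 0 τ := by
    apply ContinuousOn.intervalIntegrable
    rwa [uIcc_of_le hτ]
  have := intervalIntegral.integral_mono_on hτ (intervalIntegrable_const (c := lmin)) hInt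
    (fun h _ => hl (S i h y))
  simpa [mul_comm, cumInt] using this

def hAux (lmin lmax t : ℝ) (n : ℕ) : ℝ → ℝ :=
  (Icc 0 t).indicator (fun s => exp (-(lmin*(t-s))) * (lmax*(t-s))^n / n.factorial)

lemma hAux_measurable (lmin lmax t : ℝ) (n : ℕ) : Measurable (hAux lmin lmax t n) := by
  apply Measurable.indicator _ measurableSet_Icc
  fun_prop

lemma hAux_nonneg {lmin lmax t : ℝ} (hlmax : 0 ≤ lmax) (n : ℕ) (s : ℝ) :
    0 ≤ hAux lmin lmax t n s := by
  apply Set.indicator_nonneg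
  intro s hs
  have : 0 ≤ lmax * (t - s) := mul_nonneg hlmax (by linarith [hs.2])
  positivity

lemma hAux_le {lmin lmax t : ℝ} (hlmin : 0 ≤ lmin) (hlmax : 0 ≤ lmax) (ht : 0 ≤ t) (n : ℕ) (s : ℝ) :
    hAux lmin lmax t n s ≤ (lmax * t)^n / n.factorial := by
  unfold hAux
  by_cases hs : s ∈ Icc (0:ℝ) t
  · rw [Set.indicator_of_mem hs]
    have h1 : 0 ≤ t - s := by linarith [hs.2]
    have h2 : 0 ≤ lmax * (t - s) := mul_nonneg hlmax h1
    have h3 : lmax * (t - s) ≤ lmax * t := by nlinarith [hs.1]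
    have h4 : exp (-(lmin*(t-s))) ≤ 1 := by
      rw [Real.exp_le_one_iff]
      nlinarith
    have h6 : exp (-(lmin*(t-s))) * (lmax*(t-s))^n ≤ (lmax*t)^n :=
      calc exp (-(lmin*(t-s))) * (lmax*(t-s))^n ≤ 1 * (lmax*(t-s))^n :=
            mul_le_mul_of_nonneg_right h4 (pow_nonneg h2 n)
        _ = (lmax*(t-s))^n := one_mul _
        _ ≤ (lmax*t)^n := pow_le_pow_left₀ h2 h3 n
    have h7 : (0:ℝ) < n.factorial := Nat.cast_pos.mpr n.factorial_pos
    exact div_le_div_of_nonneg_right h6 h7.le |>.trans_eq rfl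
  · rw [Set.indicator_of_notMem hs]
    positivity

lemma Pbar_supp {Y : Type*} [MeasurableSpace Y]
    {I : Type*} [Fintype I] [MeasurableSpace I]
    (S : I → ℝ → Y → Y) (lam : Y → ℝ) (pm : I → I → Y → ℝ) (J : Kernel Y Y)
    (Pbar : Kernel (Y × I × ℝ) (Y × I × ℝ)) [IsMarkovKernel Pbar]
    (hPbar : ∀ y i, ∀ s ≥ (0:ℝ), ∀ A : Set (Y × I × ℝ), MeasurableSet A →
      ((Pbar (y, i, s)) A).toReal =
        ∫ t in Ioi (0:ℝ), lam (S i t y) * exp (-(cumInt S lam y i t)) *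
          ∫ u, ∑ j, pm i j u * A.indicator (fun _ => (1:ℝ)) (u, j, s + t) ∂(J (S i t y)))
    (y : Y) (i : I) (s : ℝ) (hs : 0 ≤ s) :
    Pbar (y,i,s) {w : Y × I × ℝ | w.2.2 < 0} = 0 := by
  have hA : MeasurableSet {w : Y × I × ℝ | w.2.2 < 0} :=
    measurableSet_lt (measurable_snd.comp measurable_snd) measurable_const
  have h := hPbar y i s hs _ hA
  have hzero : EqOn (fun t' : ℝ => lam (S i t' y) * exp (-(cumInt S lam y i t')) *
      ∫ u, ∑ j, pm i j u * Set.indicator {w : Y × I × ℝ | w.2.2 < 0} (fun _ => (1:ℝ))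
        (u,j,s+t') ∂(J (S i t' y))) (fun _ => (0:ℝ)) (Ioi 0) := by
    intro t' ht'
    have hind : ∀ (u : Y) (j : I), Set.indicator {w : Y × I × ℝ | w.2.2 < 0}
        (fun _ => (1:ℝ)) (u,j,s+t') = 0 := fun u j => Set.indicator_of_notMem
      (show ¬ ((u,j,s+t') ∈ {w : Y × I × ℝ | w.2.2 < 0}) from by
        simp only [mem_setOf_eq, not_lt]
        have := mem_Ioi.mp ht'
        linarith) _
    simp [hind]
  rw [setIntegral_congr_fun measurableSet_Ioi hzero] at h
  simp only [integral_zero] at h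
  rcases (ENNReal.toReal_eq_zero_iff _).mp h with h' | h'
  · exact h'
  · exact absurd h' (measure_ne_top _ _)

lemma stepB {Y : Type*} [MetricSpace Y] [MeasurableSpace Y] [BorelSpace Y]
    {I : Type*} [Fintype I] [MeasurableSpace I] [MeasurableSingletonClass I]
    (S : I → ℝ → Y → Y)
    (hS_cont : ∀ i, ContinuousOn (fun p : ℝ × Y => S i p.1 p.2) (Ici (0:ℝ) ×ˢ (univ : Set Y)))
    (lam : Y → ℝ) (hlam_cont : Continuous lam) (lmin lmax : ℝ) (hlmin : 0 < lmin)
    (hlam_bd : ∀ y, lmin ≤ lam y ∧ lam y ≤ lmax)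
    (pm : I → I → Y → ℝ) (hpm_sum : ∀ i y, ∑ j, pm i j y = 1)
    (J : Kernel Y Y) [IsMarkovKernel J]
    (Pbar : Kernel (Y × I × ℝ) (Y × I × ℝ)) [IsMarkovKernel Pbar]
    (hPbar : ∀ y i, ∀ s ≥ (0:ℝ), ∀ A : Set (Y × I × ℝ), MeasurableSet A →
      ((Pbar (y, i, s)) A).toReal =
        ∫ t in Ioi (0:ℝ), lam (S i t y) * exp (-(cumInt S lam y i t)) *
          ∫ u, ∑ j, pm i j u * A.indicator (fun _ => (1:ℝ)) (u, j, s + t) ∂(J (S i t y)))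
    (t : ℝ) (ht : 0 ≤ t) (n : ℕ) (y : Y) (i : I) (s : ℝ) (hs : 0 ≤ s) :
    ∫ w : Y × I × ℝ, hAux lmin lmax t n w.2.2 ∂(Pbar (y,i,s)) ≤ hAux lmin lmax t (n+1) s := by
  have hlmin0 : (0:ℝ) ≤ lmin := hlmin.le
  have hlmax0 : (0:ℝ) ≤ lmax := le_trans ((hlmin.le).trans (hlam_bd y).1) (hlam_bd y).2
  have hmeas_h : Measurable (hAux lmin lmax t n) := hAux_measurable _ _ _ _
  set C : ℝ := (lmax*t)^n / n.factorial with hCdef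
  have hC0 : 0 ≤ C := by positivity
  have hf_meas : Measurable (fun w : Y×I×ℝ => hAux lmin lmax t n w.2.2) :=
    hmeas_h.comp (measurable_snd.comp measurable_snd)
  have hf_nn : ∀ w : Y×I×ℝ, 0 ≤ hAux lmin lmax t n w.2.2 := fun w => hAux_nonneg hlmax0 _ _
  have hf_le : ∀ w : Y×I×ℝ, hAux lmin lmax t n w.2.2 ≤ C := fun w => hAux_le hlmin0 hlmax0 ht _ _
  have hf_int : Integrable (fun w : Y×I×ℝ => hAux lmin lmax t n w.2.2) (Pbar (y,i,s)) :=
    integrable_of_bounded' _ hf_meas.aestronglyMeasurable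
      (fun w => by rw [Real.norm_eq_abs, abs_of_nonneg (hf_nn w)]; exact hf_le w)
  rw [hf_int.integral_eq_integral_meas_lt (Eventually.of_forall hf_nn)]
  set a : ℝ → ℝ := fun t' => hAux lmin lmax t n (s + t') with hadef
  have ha_meas : Measurable a := hmeas_h.comp (measurable_const.add measurable_id)
  have ha_nn : ∀ t', 0 ≤ a t' := fun t' => hAux_nonneg hlmax0 _ _
  have ha_le : ∀ t', a t' ≤ C := fun t' => hAux_le hlmin0 hlmax0 ht _ _
  set G : ℝ → ℝ → ℝ := fun r t' => lmax * exp (-(lmin * t')) * (if r < a t' then 1 else 0)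
    with hGdef
  have hexp_int : Integrable (fun t' => lmax * exp (-(lmin * t')))
      (volume.restrict (Ioi (0:ℝ))) := by
    have h := (exp_neg_integrableOn_Ioi 0 hlmin).const_mul lmax
    simpa [neg_mul] using h
  -- step (i)
  have hstep1 : ∀ r : ℝ, ((Pbar (y,i,s)) {w : Y×I×ℝ | r < hAux lmin lmax t n w.2.2}).toReal
      ≤ ∫ t' in Ioi (0:ℝ), G r t' := by
    intro r
    have hA : MeasurableSet {w : Y×I×ℝ | r < hAux lmin lmax t n w.2.2} :=
      measurableSet_lt measurable_const hf_meas
    rw [hPbar y i s hs _ hA]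
    have hinner : ∀ t' : ℝ,
        (∫ u, ∑ j, pm i j u * Set.indicator {w : Y×I×ℝ | r < hAux lmin lmax t n w.2.2}
          (fun _ => (1:ℝ)) (u,j,s+t') ∂(J (S i t' y))) = (if r < a t' then 1 else 0) := by
      intro t'
      by_cases hr : r < a t'
      · rw [if_pos hr]
        have heq : (fun u => ∑ j, pm i j u * Set.indicator
            {w : Y×I×ℝ | r < hAux lmin lmax t n w.2.2} (fun _ => (1:ℝ)) (u,j,s+t'))
            = fun _ : Y => (1:ℝ) := by
          funext u
          have hind : ∀ j : I, Set.indicator {w : Y×I×ℝ | r < hAux lmin lmax t n w.2.2}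
              (fun _ => (1:ℝ)) (u,j,s+t') = 1 := fun j => Set.indicator_of_mem
            (show (u,j,s+t') ∈ {w : Y×I×ℝ | r < hAux lmin lmax t n w.2.2} from hr) _
          simp only [hind, mul_one]
          exact hpm_sum i u
        rw [heq]
        simp
      · rw [if_neg hr]
        have heq : (fun u => ∑ j, pm i j u * Set.indicator
            {w : Y×I×ℝ | r < hAux lmin lmax t n w.2.2} (fun _ => (1:ℝ)) (u,j,s+t'))
            = fun _ : Y => (0:ℝ) := by
          funext u
          have hind : ∀ j : I, Set.indicator {w : Y×I×ℝ | r < hAux lmin lmax t n w.2.2}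
              (fun _ => (1:ℝ)) (u,j,s+t') = 0 := fun j => Set.indicator_of_notMem
            (show (u,j,s+t') ∉ {w : Y×I×ℝ | r < hAux lmin lmax t n w.2.2} from hr) _
          simp [hind]
        rw [heq]
        simp
    rw [setIntegral_congr_fun measurableSet_Ioi
      (fun t' _ => by simp only [hinner t'] :
        EqOn (fun t' => lam (S i t' y) * exp (-(cumInt S lam y i t')) *
          ∫ u, ∑ j, pm i j u * Set.indicator {w : Y×I×ℝ | r < hAux lmin lmax t n w.2.2}
            (fun _ => (1:ℝ)) (u,j,s+t') ∂(J (S i t' y)))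
          (fun t' => lam (S i t' y) * exp (-(cumInt S lam y i t')) *
            (if r < a t' then 1 else 0)) (Ioi 0))]
    apply integral_mono_of_nonneg
    · exact Eventually.of_forall fun t' => mul_nonneg (mul_nonneg
        (le_of_lt (lt_of_lt_of_le hlmin (hlam_bd _).1)) (exp_pos _).le) (by positivity)
    · refine Integrable.mono' hexp_int ?_ (Eventually.of_forall fun t' => ?_)
      · exact ((measurable_const.mul ((measurable_const.mul measurable_id).neg.exp)).mul
          (Measurable.ite (measurableSet_lt measurable_const ha_meas)
            measurable_const measurable_const)).aestronglyMeasurable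
      · by_cases hr : r < a t'
        · simp only [hGdef, if_pos hr, mul_one, Real.norm_eq_abs,
            abs_of_nonneg (mul_nonneg hlmax0 (exp_pos _).le), le_refl]
        · simp only [hGdef, if_neg hr, mul_zero, norm_zero]
          positivity
    · refine (ae_restrict_iff' measurableSet_Ioi).mpr (Eventually.of_forall fun t' ht' => ?_)
      have hcl : lmin * t' ≤ cumInt S lam y i t' :=
        cumInt_lower S hS_cont lam hlam_cont lmin (fun y' => (hlam_bd y').1) y i t' (le_of_lt ht')
      have h1 : lam (S i t' y) * exp (-(cumInt S lam y i t')) ≤ lmax * exp (-(lmin * t')) :=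
        mul_le_mul (hlam_bd _).2 (Real.exp_le_exp.mpr (by linarith)) (exp_pos _).le hlmax0
      exact mul_le_mul_of_nonneg_right h1 (by positivity)
  -- product integrability
  have hset : MeasurableSet {p : ℝ × ℝ | p.1 < a p.2} :=
    measurableSet_lt measurable_fst (ha_meas.comp measurable_snd)
  have hGm : Measurable (fun p : ℝ × ℝ => G p.1 p.2) := by
    refine Measurable.mul ?_ (Measurable.ite hset measurable_const measurable_const)
    fun_prop
  have hGprod : Integrable (fun p : ℝ × ℝ => G p.1 p.2)
      ((volume.restrict (Ioi (0:ℝ))).prod (volume.restrict (Ioi (0:ℝ)))) := by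
    have hind_int : Integrable ((Iio (C+1)).indicator (fun _ => (1:ℝ)))
        (volume.restrict (Ioi (0:ℝ))) := by
      rw [integrable_indicator_iff measurableSet_Iio]
      refine (integrableOn_const_iff).mpr (Or.inr ?_)
      rw [Measure.restrict_apply measurableSet_Iio, Set.Iio_inter_Ioi]
      exact measure_Ioo_lt_top
    have hH := hind_int.mul_prod hexp_int
    refine hH.mono' hGm.aestronglyMeasurable (Eventually.of_forall fun p => ?_)
    by_cases hr : p.1 < a p.2
    · have hCp : p.1 ∈ Iio (C+1) := lt_of_lt_of_le hr ((ha_le p.2).trans (by linarith))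
      rw [Set.indicator_of_mem hCp]
      simp only [hGdef, if_pos hr, mul_one, one_mul, Real.norm_eq_abs,
        abs_of_nonneg (mul_nonneg hlmax0 (exp_pos _).le), le_refl]
    · simp only [hGdef, if_neg hr, mul_zero, norm_zero]
      by_cases hCp : p.1 ∈ Iio (C+1)
      · rw [Set.indicator_of_mem hCp]; positivity
      · rw [Set.indicator_of_notMem hCp]; simp
  have hInt2 : Integrable (fun r => ∫ t' in Ioi (0:ℝ), G r t') (volume.restrict (Ioi (0:ℝ))) :=
    hGprod.integral_prod_left
  calc ∫ r in Ioi (0:ℝ), ((Pbar (y,i,s)) {w : Y×I×ℝ | r < hAux lmin lmax t n w.2.2}).toReal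
      ≤ ∫ r in Ioi (0:ℝ), ∫ t' in Ioi (0:ℝ), G r t' :=
        integral_mono_of_nonneg (Eventually.of_forall fun r => ENNReal.toReal_nonneg) hInt2
          (Eventually.of_forall hstep1)
    _ = ∫ t' in Ioi (0:ℝ), ∫ r in Ioi (0:ℝ), G r t' := integral_integral_swap hGprod
    _ = ∫ t' in Ioi (0:ℝ), lmax * exp (-(lmin * t')) * a t' := by
        refine integral_congr_ae (Eventually.of_forall fun t' => ?_)
        dsimp only
        rw [show (fun r => G r t') = fun r =>
            lmax * exp (-(lmin * t')) * (if r < a t' then (1:ℝ) else 0) from rfl,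
          integral_const_mul]
        congr 1
        have h2 : EqOn (fun r => if r < a t' then (1:ℝ) else 0)
            ((Ioo 0 (a t')).indicator fun _ => (1:ℝ)) (Ioi 0) := by
          intro r hr
          by_cases h : r < a t'
          · simp [h, Set.indicator_apply, Set.mem_Ioo, mem_Ioi.mp hr]
          · simp [h, Set.indicator_apply, Set.mem_Ioo]
        rw [setIntegral_congr_fun measurableSet_Ioi h2, setIntegral_indicator measurableSet_Ioo]
        rw [Set.inter_eq_right.mpr Ioo_subset_Ioi_self, setIntegral_const]
        simp [Real.volume_Ioo, ENNReal.toReal_ofReal (by linarith [ha_nn t'] : (0:ℝ) ≤ a t' - 0)]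
        exact ha_nn t'
    _ ≤ hAux lmin lmax t (n+1) s := by
        by_cases hst : s ≤ t
        · refine le_of_eq ?_
          set τ : ℝ := t - s with hτdef
          have hτ : 0 ≤ τ := by rw [hτdef]; linarith
          have heq : EqOn (fun t' => lmax * exp (-(lmin*t')) * a t')
              ((Ioc 0 τ).indicator fun t' => lmax * exp (-(lmin*t')) *
                (exp (-(lmin*(t-(s+t')))) * (lmax*(t-(s+t')))^n / n.factorial)) (Ioi 0) := by
            intro t' ht'
            by_cases h2 : t' ≤ τ
            · have hmem : s + t' ∈ Icc 0 t := mem_Icc.mpr ⟨by linarith [mem_Ioi.mp ht'], by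
                have := mem_Ioi.mp ht'; rw [hτdef] at h2; linarith⟩
              rw [Set.indicator_of_mem (mem_Ioc.mpr ⟨mem_Ioi.mp ht', h2⟩)]
              simp only [hadef, hAux, Set.indicator_of_mem hmem]
            · rw [Set.indicator_of_notMem (fun hc => h2 (mem_Ioc.mp hc).2)]
              have : s + t' ∉ Icc 0 t := by
                intro hc
                apply h2
                rw [hτdef]
                linarith [(mem_Icc.mp hc).2]
              simp only [hadef, hAux, Set.indicator_of_notMem this, mul_zero]
          rw [setIntegral_congr_fun measurableSet_Ioi heq,
            setIntegral_indicator measurableSet_Ioc,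
            Set.inter_eq_right.mpr Ioc_subset_Ioi_self,
            ← intervalIntegral.integral_of_le hτ]
          have hsimp : ∀ t' : ℝ, lmax * exp (-(lmin*t')) *
              (exp (-(lmin*(t-(s+t')))) * (lmax*(t-(s+t')))^n / n.factorial)
              = (lmax^(n+1) * exp (-(lmin*τ)) / n.factorial) * (τ - t')^n := by
            intro t'
            have h3 : t - (s + t') = τ - t' := by rw [hτdef]; ring
            rw [h3, mul_pow]
            have h4 : exp (-(lmin*t')) * exp (-(lmin*(τ - t'))) = exp (-(lmin*τ)) := by
              rw [← Real.exp_add]; ring_nf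
            calc lmax * exp (-(lmin*t')) * (exp (-(lmin*(τ-t'))) *
                  (lmax^n * (τ-t')^n) / n.factorial)
                = lmax * (exp (-(lmin*t')) * exp (-(lmin*(τ-t')))) *
                  (lmax^n * (τ-t')^n) / n.factorial := by ring
              _ = (lmax^(n+1) * exp (-(lmin*τ)) / n.factorial) * (τ - t')^n := by
                  rw [h4]; ring
          simp only [hsimp]
          rw [intervalIntegral.integral_const_mul]
          have h5 : (∫ t' in (0:ℝ)..τ, (τ - t')^n) = τ^(n+1)/(n+1) := by
            rw [intervalIntegral.integral_comp_sub_left (fun u => u^n) τ]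
            simp [integral_pow]
          rw [h5]
          have hsmem : s ∈ Icc 0 t := ⟨hs, hst⟩
          rw [hAux, Set.indicator_of_mem hsmem]
          have hts : t - s = τ := rfl
          rw [hts, mul_pow]
          rw [Nat.factorial_succ]
          push_cast
          have hfac : (n.factorial : ℝ) ≠ 0 := Nat.cast_ne_zero.mpr n.factorial_ne_zero
          have hn1 : ((n:ℝ) + 1) ≠ 0 := by positivity
          field_simp
        · have heq : EqOn (fun t' => lmax * exp (-(lmin*t')) * a t')
              (fun _ => (0:ℝ)) (Ioi 0) := by
            intro t' ht'
            have : s + t' ∉ Icc 0 t := fun hc => hst (by linarith [hc.2, mem_Ioi.mp ht'])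
            simp only [hadef, hAux, Set.indicator_of_notMem this, mul_zero]
          rw [setIntegral_congr_fun measurableSet_Ioi heq]
          simp only [integral_zero]
          exact hAux_nonneg hlmax0 _ _

theorem n_jumps_probability_bound
    {Y : Type*} [MetricSpace Y] [TopologicalSpace.SeparableSpace Y] [CompleteSpace Y]
    [MeasurableSpace Y] [BorelSpace Y]
    {I : Type*} [Fintype I] [Nonempty I] [TopologicalSpace I] [DiscreteTopology I]
    [MeasurableSpace I] [MeasurableSingletonClass I]
    (S : I → ℝ → Y → Y)
    (hS_cont : ∀ i, ContinuousOn (fun p : ℝ × Y => S i p.1 p.2) (Ici (0:ℝ) ×ˢ (univ : Set Y)))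
    (hS_zero : ∀ i y, S i 0 y = y)
    (hS_add : ∀ i, ∀ s ≥ (0:ℝ), ∀ t ≥ (0:ℝ), ∀ y, S i (s + t) y = S i s (S i t y))
    (lam : Y → ℝ) (hlam_cont : Continuous lam) (lmin lmax : ℝ) (hlmin : 0 < lmin)
    (hlam_bd : ∀ y, lmin ≤ lam y ∧ lam y ≤ lmax)
    (pm : I → I → Y → ℝ) (hpm_cont : ∀ i j, Continuous (pm i j))
    (hpm_mem : ∀ i j y, pm i j y ∈ Icc (0:ℝ) 1) (hpm_sum : ∀ i y, ∑ j, pm i j y = 1)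
    (J : Kernel Y Y) [IsMarkovKernel J]
    (Pbar : Kernel (Y × I × ℝ) (Y × I × ℝ)) [IsMarkovKernel Pbar]
    (hPbar : ∀ y i, ∀ s ≥ (0:ℝ), ∀ A : Set (Y × I × ℝ), MeasurableSet A →
      ((Pbar (y, i, s)) A).toReal =
        ∫ t in Ioi (0:ℝ), lam (S i t y) * exp (-(cumInt S lam y i t)) *
          ∫ u, ∑ j, pm i j u * A.indicator (fun _ => (1:ℝ)) (u, j, s + t) ∂(J (S i t y))) :
    ∀ x : Y × I, ∀ t ≥ (0:ℝ), ∀ n : ℕ,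
      ∫ q : Y × I × ℝ,
          (Icc (0:ℝ) t).indicator (fun _ => (1:ℝ)) q.2.2 *
            exp (-(cumInt S lam q.1 q.2.1 (t - q.2.2)))
          ∂(kIter Pbar n (x.1, x.2, 0)) ≤ exp (-(lmin * t)) * (lmax * t) ^ n / n.factorial := by
  intro x t ht n
  have hlmax0 : (0:ℝ) ≤ lmax := le_trans (hlmin.le.trans (hlam_bd x.1).1) (hlam_bd x.1).2
  have hlmin0 : (0:ℝ) ≤ lmin := hlmin.le
  have hmk : ∀ m, IsMarkovKernel (kIter Pbar m) := kIter_markov Pbar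
  have h0meas : Measurable (fun w : Y × I × ℝ => hAux lmin lmax t 0 w.2.2) :=
    (hAux_measurable lmin lmax t 0).comp (measurable_snd.comp measurable_snd)
  have h0nn : ∀ w : Y × I × ℝ, 0 ≤ hAux lmin lmax t 0 w.2.2 :=
    fun w => hAux_nonneg hlmax0 _ _
  have h0le : ∀ w : Y × I × ℝ, hAux lmin lmax t 0 w.2.2 ≤ (lmax * t)^0 / Nat.factorial 0 :=
    fun w => hAux_le hlmin0 hlmax0 ht _ _
  have key : ∀ m : ℕ, ∀ y : Y, ∀ i : I, ∀ s : ℝ, 0 ≤ s →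
      ∫ w : Y × I × ℝ, hAux lmin lmax t 0 w.2.2 ∂(kIter Pbar m (y,i,s))
        ≤ hAux lmin lmax t m s := by
    intro m
    induction m with
    | zero =>
      intro y i s hs
      rw [show kIter Pbar 0 = Kernel.id from rfl, Kernel.id_apply,
        integral_dirac' _ _ h0meas.stronglyMeasurable]
    | succ m ih =>
      intro y i s hs
      haveI := hmk m
      rw [kIter_succ' Pbar m,
        kernel_integral_comp (kIter Pbar m) Pbar (y,i,s) h0meas h0nn h0le]
      have hae : ∀ᵐ w ∂(Pbar (y,i,s)), 0 ≤ w.2.2 := by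
        rw [ae_iff]
        have hset : {w : Y × I × ℝ | ¬ 0 ≤ w.2.2} = {w : Y × I × ℝ | w.2.2 < 0} := by
          ext w; simp [not_le]
        rw [hset]
        exact Pbar_supp S lam pm J Pbar hPbar y i s hs
      refine le_trans (integral_mono_of_nonneg ?_ ?_ ?_)
        (stepB S hS_cont lam hlam_cont lmin lmax hlmin hlam_bd pm hpm_sum J Pbar hPbar
          t ht m y i s hs)
      · exact Eventually.of_forall fun w => integral_nonneg h0nn
      · exact integrable_of_bounded' _
          (((hAux_measurable lmin lmax t m).comp
            (measurable_snd.comp measurable_snd)).aestronglyMeasurable)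
          (fun w => by
            rw [Real.norm_eq_abs, abs_of_nonneg (hAux_nonneg hlmax0 _ _)]
            exact hAux_le hlmin0 hlmax0 ht m _)
      · filter_upwards [hae] with w hw
        have h := ih w.1 w.2.1 w.2.2 hw
        simpa using h
  have horig_nn : ∀ q : Y × I × ℝ,
      0 ≤ (Icc (0:ℝ) t).indicator (fun _ => (1:ℝ)) q.2.2 *
        exp (-(cumInt S lam q.1 q.2.1 (t - q.2.2))) :=
    fun q => mul_nonneg (Set.indicator_nonneg (fun _ _ => zero_le_one) _) (exp_pos _).le
  have hptwise : ∀ q : Y × I × ℝ,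
      (Icc (0:ℝ) t).indicator (fun _ => (1:ℝ)) q.2.2 *
        exp (-(cumInt S lam q.1 q.2.1 (t - q.2.2))) ≤ hAux lmin lmax t 0 q.2.2 := by
    intro q
    by_cases hq : q.2.2 ∈ Icc (0:ℝ) t
    · rw [Set.indicator_of_mem hq, one_mul]
      unfold hAux
      rw [Set.indicator_of_mem hq]
      simp only [pow_zero, Nat.factorial_zero, Nat.cast_one, mul_one, div_one]
      refine Real.exp_le_exp.mpr ?_
      have hcl := cumInt_lower S hS_cont lam hlam_cont lmin (fun y' => (hlam_bd y').1)
        q.1 q.2.1 (t - q.2.2) (by linarith [(mem_Icc.mp hq).2])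
      linarith
    · rw [Set.indicator_of_notMem hq, zero_mul]
      exact hAux_nonneg hlmax0 _ _
  haveI := hmk n
  calc ∫ q : Y × I × ℝ,
        (Icc (0:ℝ) t).indicator (fun _ => (1:ℝ)) q.2.2 *
          exp (-(cumInt S lam q.1 q.2.1 (t - q.2.2))) ∂(kIter Pbar n (x.1, x.2, 0))
      ≤ ∫ q : Y × I × ℝ, hAux lmin lmax t 0 q.2.2 ∂(kIter Pbar n (x.1, x.2, 0)) :=
        integral_mono_of_nonneg (Eventually.of_forall horig_nn)
          (integrable_of_bounded' _ h0meas.aestronglyMeasurable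
            (fun w => by
              rw [Real.norm_eq_abs, abs_of_nonneg (h0nn w)]
              exact h0le w))
          (Eventually.of_forall hptwise)
    _ ≤ hAux lmin lmax t n 0 := key n x.1 x.2 0 le_rfl
    _ = exp (-(lmin * t)) * (lmax * t) ^ n / n.factorial := by
        unfold hAux
        rw [Set.indicator_of_mem (mem_Icc.mpr ⟨le_rfl, ht⟩)]
        rw [sub_zero]
end
end
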